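/- arXiv:1708.06691 — 3 statements merged into one kernel-verified Lean document; each statement's English description precedes it below -/
import Mathlib

section
/- Let D be an in-semicomplete digraph, k a positive integer, and P a k-pack of D. Then either there exists a coloring of D orthogonal to P, or there exists a k-pack Q of D with ||Q|| = ||P|| + 1 and e(Q) ⊆ e(P) ∪ (V(D) \ V(P)). -/
open scoped Classical

namespace DigraphPaper

variable {V : Type*} [Fintype V] [DecidableEq V]

/-- Vertices `u` and `v` are adjacent in the digraph with arc relation `A`. -/
def DAdj (A : V → V → Prop) (u v : V) : Prop := A u v ∨ A v u

/-- A set of vertices is stable if its vertices are pairwise nonadjacent. -/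
def DStable (A : V → V → Prop) (S : Set V) : Prop :=
  ∀ u ∈ S, ∀ v ∈ S, u ≠ v → ¬ DAdj A u v

/-- The in-neighborhood of every vertex induces a semicomplete digraph. -/
def InSemicomplete (A : V → V → Prop) : Prop :=
  ∀ v u w : V, A u v → A w v → u ≠ w → DAdj A u w

/-- The out-neighborhood of every vertex induces a semicomplete digraph. -/
def OutSemicomplete (A : V → V → Prop) : Prop :=
  ∀ v u w : V, A v u → A v w → u ≠ w → DAdj A u w

/-- A path: a nonempty list of distinct vertices with consecutive arcs. -/
def IsPath (A : V → V → Prop) (p : List V) : Prop :=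
  p ≠ [] ∧ p.Nodup ∧ p.Chain' A

/-- A collection of pairwise vertex-disjoint lists. -/
def PDisjoint (P : Finset (List V)) : Prop :=
  ∀ p ∈ P, ∀ q ∈ P, p ≠ q → ∀ x : V, x ∈ p → x ∉ q

/-- A path partition: vertex-disjoint paths covering all vertices. -/
def IsPathPartition (A : V → V → Prop) (P : Finset (List V)) : Prop :=
  (∀ p ∈ P, IsPath A p) ∧ PDisjoint P ∧ ∀ v : V, ∃ p ∈ P, v ∈ p

/-- The k-norm of a collection of paths. -/
def knorm (k : ℕ) (P : Finset (List V)) : ℕ := ∑ p ∈ P, min p.length k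

/-- The set of final vertices of the paths in `P`. -/
def pends (P : Finset (List V)) : Set V := {x | ∃ p ∈ P, p.getLast? = some x}

/-- A partial k-coloring: k pairwise disjoint stable sets. -/
def IsPartialKColoring (A : V → V → Prop) (k : ℕ) (C : Fin k → Finset V) : Prop :=
  (∀ i, DStable A (C i : Set V)) ∧ ∀ i j, i ≠ j → Disjoint (C i) (C j)

/-- Orthogonality of a partial k-coloring to a path partition:
each path meets `min |P| k` distinct color classes. -/
def OrthoPC (k : ℕ) (C : Fin k → Finset V) (P : Finset (List V)) : Prop :=
  ∀ p ∈ P, min p.length k ≤ (Finset.univ.filter fun i : Fin k => ∃ x ∈ p, x ∈ C i).card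

/-- A k-optimal path partition. -/
def KOptimal (A : V → V → Prop) (k : ℕ) (P : Finset (List V)) : Prop :=
  IsPathPartition A P ∧
    ∀ Q : Finset (List V), IsPathPartition A Q → knorm k P ≤ knorm k Q

/-- A k-pack: at most k vertex-disjoint paths. -/
def IsKPack (A : V → V → Prop) (k : ℕ) (P : Finset (List V)) : Prop :=
  P.card ≤ k ∧ (∀ p ∈ P, IsPath A p) ∧ PDisjoint P

/-- Weight of a k-pack: number of covered vertices. -/
def weight (P : Finset (List V)) : ℕ := ∑ p ∈ P, p.length

/-- The set of vertices covered by the paths of `P`. -/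
def cover (P : Finset (List V)) : Finset V := P.biUnion List.toFinset

/-- An optimal k-pack. -/
def OptimalKPack (A : V → V → Prop) (k : ℕ) (P : Finset (List V)) : Prop :=
  IsKPack A k P ∧ ∀ Q : Finset (List V), IsKPack A k Q → weight Q ≤ weight P

/-- A coloring: a partition of the vertex set into stable sets. -/
def IsColoring (A : V → V → Prop) (C : Finset (Finset V)) : Prop :=
  (∀ c ∈ C, DStable A (c : Set V)) ∧ (∀ c ∈ C, c.Nonempty) ∧
  (∀ c ∈ C, ∀ c' ∈ C, c ≠ c' → Disjoint c c') ∧ ∀ v : V, ∃ c ∈ C, v ∈ c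

/-- Orthogonality of a coloring to a k-pack:
each color class meets `min |C| k` distinct paths. -/
def OrthoCP (k : ℕ) (C : Finset (Finset V)) (P : Finset (List V)) : Prop :=
  ∀ c ∈ C, min c.card k ≤ (P.filter fun p => ∃ x ∈ c, x ∈ p).card

/-- π_k(D): minimum k-norm of a path partition. -/
noncomputable def pik (A : V → V → Prop) (k : ℕ) : ℕ :=
  sInf {n | ∃ P : Finset (List V), IsPathPartition A P ∧ knorm k P = n}

/-- α_k(D): maximum weight of a partial k-coloring. -/
noncomputable def alphak (A : V → V → Prop) (k : ℕ) : ℕ :=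
  sSup {n | ∃ C : Fin k → Finset V, IsPartialKColoring A k C ∧ ∑ i, (C i).card = n}

/-- π(D): minimum number of paths in a path partition. -/
noncomputable def piNum (A : V → V → Prop) : ℕ :=
  sInf {n | ∃ P : Finset (List V), IsPathPartition A P ∧ P.card = n}

/-- α(D): maximum size of a stable set. -/
noncomputable def alphaNum (A : V → V → Prop) : ℕ :=
  sSup {n | ∃ S : Finset V, DStable A (S : Set V) ∧ S.card = n}

/-- k-norm of a coloring. -/
def cnorm (k : ℕ) (C : Finset (Finset V)) : ℕ := ∑ c ∈ C, min c.card k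

/-- χ_k(D): minimum k-norm of a coloring. -/
noncomputable def chik (A : V → V → Prop) (k : ℕ) : ℕ :=
  sInf {n | ∃ C : Finset (Finset V), IsColoring A C ∧ cnorm k C = n}

/-- λ_k(D): maximum weight of a k-pack. -/
noncomputable def lamk (A : V → V → Prop) (k : ℕ) : ℕ :=
  sSup {n | ∃ P : Finset (List V), IsKPack A k P ∧ weight P = n}

section Part1

set_option linter.unusedSectionVars false
variable {V : Type*} [Fintype V] [DecidableEq V]
variable {A : V → V → Prop}

lemma IsPath.ne_nil {p : List V} (h : IsPath A p) : p ≠ [] := h.1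
lemma IsPath.nodup {p : List V} (h : IsPath A p) : p.Nodup := h.2.1
lemma IsPath.chain' {p : List V} (h : IsPath A p) : p.Chain' A := h.2.2

lemma isPath_append {p q : List V} (hp : IsPath A p) (hq : IsPath A q)
    (hd : ∀ x ∈ p, x ∉ q) {a b : V} (ha : p.getLast? = some a) (hb : q.head? = some b)
    (hab : A a b) : IsPath A (p ++ q) := by
  refine ⟨by simp [hp.ne_nil], ?_, ?_⟩
  · rw [List.nodup_append']
    exact ⟨hp.nodup, hq.nodup, fun x hx => hd x hx⟩
  · refine List.isChain_append.mpr ?_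
    refine ⟨hp.chain', hq.chain', ?_⟩
    intro x hx y hy
    rw [ha] at hx; rw [hb] at hy
    simp only [Option.mem_some_iff] at hx hy
    subst hx; subst hy; exact hab

lemma isPath_prefix {p q : List V} (h : IsPath A (p ++ q)) (hne : p ≠ []) : IsPath A p :=
  ⟨hne, (List.nodup_append.mp h.nodup).1, h.chain'.prefix ⟨q, rfl⟩⟩

lemma isPath_suffix {p q : List V} (h : IsPath A (p ++ q)) (hne : q ≠ []) : IsPath A q :=
  ⟨hne, (List.nodup_append.mp h.nodup).2.1, (List.isChain_append.mp h.chain').2.1⟩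

/-- Walk-back lemma. -/
lemma walkback (hin : InSemicomplete A) {q : List V} (hq : IsPath A q) {v b : V}
    (hv : v ∉ q) (hb : b ∈ q) (hvb : A v b) :
    (∃ h, q.head? = some h ∧ A v h) ∨
    (∃ l1 w x l2, q = l1 ++ w :: x :: l2 ∧ A w v ∧ A v x) := by
  induction q with
  | nil => cases hb
  | cons c t ih =>
    rcases List.mem_cons.mp hb with rfl | hbt
    · exact Or.inl ⟨b, rfl, hvb⟩
    · have ht : IsPath A t := by
        rcases t with _ | ⟨z, t'⟩
        · cases hbt
        · exact ⟨by simp, (List.nodup_cons.mp hq.nodup).2, (List.isChain_cons_cons.mp hq.chain').2⟩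
      have hvt : v ∉ t := fun h => hv (List.mem_cons_of_mem _ h)
      rcases ih ht hvt hbt with ⟨h, hh, hvh⟩ | ⟨l1, w, x, l2, ht', hwv, hvx⟩
      · rcases t with _ | ⟨z, t'⟩
        · cases hbt
        · simp only [List.head?_cons, Option.some.injEq] at hh
          subst hh
          have hcz : A c z := (List.isChain_cons_cons.mp hq.chain').1
          have hvc : v ≠ c := fun he => hv (he ▸ List.mem_cons_self)
          rcases hin z v c hvh hcz hvc with hvc' | hcv
          · exact Or.inl ⟨c, rfl, hvc'⟩
          · exact Or.inr ⟨[], c, z, t', rfl, hcv, hvh⟩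
      · exact Or.inr ⟨c :: l1, w, x, l2, by rw [ht']; rfl, hwv, hvx⟩

end Part1
section Part2
set_option linter.unusedSectionVars false
variable {V : Type*} [Fintype V] [DecidableEq V]
variable {A : V → V → Prop}

lemma getLast?_append_of_ne_nil {p q : List V} (hq : q ≠ []) :
    (p ++ q).getLast? = q.getLast? := by
  rw [List.getLast?_append]
  rcases q.eq_nil_or_concat with rfl | ⟨t', b, rfl⟩
  · exact absurd rfl hq
  · simp

/-- Merge-zigzag lemma: a prefix-path ending with an arc into a path q can be
combined with q into a single path on the union, ending at q's end. -/
lemma mzl (hin : InSemicomplete A) : ∀ (n : ℕ) (p q : List V),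
    p.length + q.length ≤ n → IsPath A p → IsPath A q → (∀ x ∈ p, x ∉ q) →
    ∀ v b, p.getLast? = some v → b ∈ q → A v b →
    ∃ R : List V, IsPath A R ∧ (∀ y, y ∈ R ↔ y ∈ p ∨ y ∈ q) ∧
      R.length = p.length + q.length ∧ R.getLast? = q.getLast? := by
  intro n
  induction n with
  | zero =>
    intro p q hn hp _ _ _ _ hv _ _
    exfalso
    have := List.mem_of_mem_getLast? hv
    have : p ≠ [] := hp.ne_nil
    rcases p with _ | _
    · exact this rfl
    · simp at hn
  | succ n ih =>
    intro p q hn hp hq hd v b hv hb hvb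
    have hvp : v ∈ p := List.mem_of_mem_getLast? hv
    have hvq : v ∉ q := hd v hvp
    rcases walkback hin hq hvq hb hvb with ⟨h, hh, hvh⟩ | ⟨l1, w, x, l2, hsplit, hwv, hvx⟩
    · refine ⟨p ++ q, isPath_append hp hq hd hv hh hvh, ?_, by simp, getLast?_append_of_ne_nil hq.ne_nil⟩
      intro y; simp
    · set q₁ : List V := l1 ++ [w] with hq₁
      set q₂ : List V := x :: l2 with hq₂
      have hqeq : q = q₁ ++ q₂ := by simp [hq₁, hq₂, hsplit]
      have hq₂ne : q₂ ≠ [] := by simp [hq₂]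
      have hq₁path : IsPath A q₁ := isPath_prefix (hqeq ▸ hq) (by simp [hq₁])
      have hq₁last : q₁.getLast? = some w := by simp [hq₁]
      have hd' : ∀ y ∈ q₁, y ∉ p := by
        intro y hy hyp
        exact hd y hyp (hqeq ▸ List.mem_append_left _ hy)
      have hlen : q₁.length + p.length ≤ n := by
        have h1 : q.length = q₁.length + q₂.length := by rw [hqeq]; simp
        have h2 : 1 ≤ q₂.length := by simp [hq₂]
        omega
      obtain ⟨R', hR'path, hR'mem, hR'len, hR'last⟩ :=
        ih q₁ p hlen hq₁path hp hd' w v hq₁last hvp hwv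
      have hR'last' : R'.getLast? = some v := by rw [hR'last, hv]
      have hq₁q₂ : ∀ y ∈ q₁, y ∉ q₂ := by
        have := hq.nodup
        rw [hqeq, List.nodup_append'] at this
        exact fun y hy => this.2.2 hy
      have hdR : ∀ y ∈ R', y ∉ q₂ := by
        intro y hy
        rcases (hR'mem y).mp hy with hy1 | hy2
        · exact hq₁q₂ y hy1
        · exact fun hc => hd y hy2 (hqeq ▸ List.mem_append_right _ hc)
      refine ⟨R' ++ q₂, isPath_append hR'path (isPath_suffix (hqeq ▸ hq) hq₂ne) hdR
        hR'last' (by simp [hq₂]) hvx, ?_, ?_, ?_⟩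
      · intro y
        simp only [List.mem_append, hR'mem, hqeq]
        tauto
      · rw [List.length_append, hR'len, hqeq]
        simp; omega
      · rw [getLast?_append_of_ne_nil hq₂ne, hqeq, getLast?_append_of_ne_nil hq₂ne]

end Part2
section Part3
set_option linter.unusedSectionVars false
variable {V : Type*} [Fintype V] [DecidableEq V]
variable {A : V → V → Prop}

lemma pends_subset_of_mem {P Q : Finset (List V)} (h : Q ⊆ P) : pends Q ⊆ pends P := by
  rintro x ⟨p, hp, hlast⟩
  exact ⟨p, h hp, hlast⟩

lemma pends_union {P Q : Finset (List V)} : pends (P ∪ Q) ⊆ pends P ∪ pends Q := by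
  rintro x ⟨p, hp, hlast⟩
  rcases Finset.mem_union.mp hp with h | h
  · exact Or.inl ⟨p, h, hlast⟩
  · exact Or.inr ⟨p, h, hlast⟩

lemma pack_core (k : ℕ) {P old new : Finset (List V)} (hP : IsKPack A k P)
    (hold : old ⊆ P)
    (hpaths : ∀ r ∈ new, IsPath A r)
    (hdn : PDisjoint new)
    (hsep : ∀ r ∈ new, ∀ p ∈ P, p ∉ old → ∀ x ∈ r, x ∉ p) :
    (∀ r ∈ P \ old ∪ new, IsPath A r) ∧ PDisjoint (P \ old ∪ new) ∧
    weight (P \ old ∪ new) + weight old = weight P + weight new ∧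
    pends (P \ old ∪ new) ⊆ pends P ∪ pends new ∧
    (P \ old ∪ new).card + old.card = P.card + new.card := by
  have hdisj : Disjoint (P \ old) new := by
    rw [Finset.disjoint_left]
    intro r hr hrnew
    have hrP := Finset.mem_sdiff.mp hr
    have : ∀ x ∈ r, x ∉ r := hsep r hrnew r hrP.1 hrP.2
    have hne := (hpaths r hrnew).ne_nil
    rcases List.exists_cons_of_ne_nil hne with ⟨a, t, rfl⟩
    exact this a List.mem_cons_self List.mem_cons_self
  refine ⟨?_, ?_, ?_, ?_, ?_⟩
  · intro r hr
    rcases Finset.mem_union.mp hr with h | h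
    · exact hP.2.1 r (Finset.mem_sdiff.mp h).1
    · exact hpaths r h
  · intro p hp q hq hpq x hxp
    rcases Finset.mem_union.mp hp with h1 | h1 <;> rcases Finset.mem_union.mp hq with h2 | h2
    · exact hP.2.2 p (Finset.mem_sdiff.mp h1).1 q (Finset.mem_sdiff.mp h2).1 hpq x hxp
    · intro hxq
      exact hsep q h2 p (Finset.mem_sdiff.mp h1).1 (Finset.mem_sdiff.mp h1).2 x hxq hxp
    · exact hsep p h1 q (Finset.mem_sdiff.mp h2).1 (Finset.mem_sdiff.mp h2).2 x hxp
    · exact hdn p h1 q h2 hpq x hxp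
  · unfold weight
    rw [Finset.sum_union hdisj, add_right_comm, Finset.sum_sdiff hold]
  · intro x hx
    rcases pends_union hx with h | h
    · exact Or.inl (pends_subset_of_mem (Finset.sdiff_subset) h)
    · exact Or.inr h
  · rw [Finset.card_union_of_disjoint hdisj, add_right_comm,
      Finset.card_sdiff_add_card_eq_card hold]

end Part3
section Part4
set_option linter.unusedSectionVars false
variable {V : Type*} [Fintype V] [DecidableEq V]

/-- A chain: a path all of whose vertices avoid the cover of `P`. -/
def UChain (A : V → V → Prop) (P : Finset (List V)) (l : List V) : Prop :=
  IsPath A l ∧ ∀ x ∈ l, x ∉ cover P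

/-- Longest chain starting at `u`. -/
noncomputable def lamR (A : V → V → Prop) (P : Finset (List V)) (u : V) : ℕ :=
  sSup {n | ∃ l, UChain A P l ∧ l.head? = some u ∧ l.length = n}

/-- Longest chain length. -/
noncomputable def Mchain (A : V → V → Prop) (P : Finset (List V)) : ℕ :=
  sSup {n | ∃ l, UChain A P l ∧ l.length = n}

variable {A : V → V → Prop} {P : Finset (List V)}

lemma mem_cover {p : List V} (hp : p ∈ P) {x : V} (hx : x ∈ p) : x ∈ cover P :=
  Finset.mem_biUnion.mpr ⟨p, hp, List.mem_toFinset.mpr hx⟩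

lemma bdd_len (S : Set ℕ) (hS : ∀ n ∈ S, ∃ l : List V, l.Nodup ∧ l.length = n) :
    BddAbove S := by
  refine ⟨Fintype.card V, fun n hn => ?_⟩
  obtain ⟨l, hl, rfl⟩ := hS n hn
  exact hl.length_le_card

lemma lamR_spec {u : V} (hu : u ∉ cover P) :
    ∃ l, UChain A P l ∧ l.head? = some u ∧ l.length = lamR A P u := by
  have hne : {n | ∃ l, UChain A P l ∧ l.head? = some u ∧ l.length = n}.Nonempty :=
    ⟨1, [u], ⟨⟨by simp, by simp, List.isChain_singleton _⟩, by simpa using hu⟩, rfl, rfl⟩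
  have hbdd : BddAbove {n | ∃ l, UChain A P l ∧ l.head? = some u ∧ l.length = n} :=
    bdd_len _ (fun n ⟨l, hl, _, hlen⟩ => ⟨l, hl.1.nodup, hlen⟩)
  obtain ⟨l, h1, h2, h3⟩ := Nat.sSup_mem hne hbdd
  exact ⟨l, h1, h2, h3⟩

lemma one_le_lamR {u : V} (hu : u ∉ cover P) : 1 ≤ lamR A P u := by
  have hbdd : BddAbove {n | ∃ l, UChain A P l ∧ l.head? = some u ∧ l.length = n} :=
    bdd_len _ (fun n ⟨l, hl, _, hlen⟩ => ⟨l, hl.1.nodup, hlen⟩)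
  exact le_csSup hbdd ⟨[u], ⟨⟨by simp, by simp, List.isChain_singleton _⟩, by simpa using hu⟩, rfl, rfl⟩

lemma le_Mchain {l : List V} (hl : UChain A P l) : l.length ≤ Mchain A P := by
  have hbdd : BddAbove {n | ∃ l, UChain A P l ∧ l.length = n} :=
    bdd_len _ (fun n ⟨l, hl, hlen⟩ => ⟨l, hl.1.nodup, hlen⟩)
  exact le_csSup hbdd ⟨l, hl, rfl⟩

lemma lamR_le_Mchain {u : V} (hu : u ∉ cover P) : lamR A P u ≤ Mchain A P := by
  obtain ⟨l, hl, _, hlen⟩ := lamR_spec (A := A) hu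
  exact hlen ▸ le_Mchain hl

lemma Mchain_spec (hU : ∃ u : V, u ∉ cover P) :
    ∃ l, UChain A P l ∧ l.length = Mchain A P := by
  obtain ⟨u, hu⟩ := hU
  have hne : {n | ∃ l, UChain A P l ∧ l.length = n}.Nonempty :=
    ⟨1, [u], ⟨⟨by simp, by simp, List.isChain_singleton _⟩, by simpa using hu⟩, rfl⟩
  have hbdd : BddAbove {n | ∃ l, UChain A P l ∧ l.length = n} :=
    bdd_len _ (fun n ⟨l, hl, hlen⟩ => ⟨l, hl.1.nodup, hlen⟩)
  exact Nat.sSup_mem hne hbdd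

lemma uchain_take {l : List V} (hl : UChain A P l) {c : ℕ} (hc1 : 1 ≤ c) :
    UChain A P (l.take c) ∧ (l.take c).head? = l.head? := by
  refine ⟨⟨⟨?_, hl.1.nodup.sublist (List.take_sublist _ _),
    hl.1.chain'.prefix (List.take_prefix _ _)⟩, fun x hx => hl.2 x (List.mem_of_mem_take hx)⟩, ?_⟩
  · have := hl.1.ne_nil
    rcases l with _ | ⟨a, t⟩
    · exact absurd rfl this
    · rcases c with _ | c
      · omega
      · simp
  · rcases l with _ | ⟨a, t⟩
    · simp
    · rcases c with _ | c
      · omega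
      · simp

lemma length_take_of_le {l : List V} {c : ℕ} (h : c ≤ l.length) : (l.take c).length = c := by
  simp [h]

end Part4
section Part5
set_option linter.unusedSectionVars false
variable {V : Type*} [Fintype V] [DecidableEq V]

/-- Acyclicity of a finite arc set. -/
def Acyc (S : Finset (V × V)) : Prop :=
  ∀ e ∈ S, ¬ Relation.ReflTransGen (fun a b => (a, b) ∈ S) e.2 e.1

/-- A chain of `S`-arcs avoiding the cover. -/
def SChain (P : Finset (List V)) (S : Finset (V × V)) (l : List V) : Prop :=
  l ≠ [] ∧ l.Nodup ∧ l.Chain' (fun a b => (a, b) ∈ S) ∧ ∀ x ∈ l, x ∉ cover P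

/-- Level function: longest `S`-chain starting at `u`. -/
noncomputable def lev (P : Finset (List V)) (S : Finset (V × V)) (u : V) : ℕ :=
  sSup {n | ∃ l, SChain P S l ∧ l.head? = some u ∧ l.length = n}

variable {A : V → V → Prop} {P : Finset (List V)} {S : Finset (V × V)}

lemma lev_bdd (u : V) : BddAbove {n | ∃ l, SChain P S l ∧ l.head? = some u ∧ l.length = n} :=
  bdd_len _ (fun n ⟨l, hl, _, hlen⟩ => ⟨l, hl.2.1, hlen⟩)

lemma schain_single {u : V} (hu : u ∉ cover P) : SChain P S [u] :=
  ⟨by simp, by simp, List.isChain_singleton _, by simpa using hu⟩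

lemma one_le_lev {u : V} (hu : u ∉ cover P) : 1 ≤ lev P S u :=
  le_csSup (lev_bdd u) ⟨[u], schain_single hu, rfl, rfl⟩

lemma lev_spec {u : V} (hu : u ∉ cover P) :
    ∃ l, SChain P S l ∧ l.head? = some u ∧ l.length = lev P S u := by
  have hne : {n | ∃ l, SChain P S l ∧ l.head? = some u ∧ l.length = n}.Nonempty :=
    ⟨1, [u], schain_single hu, rfl, rfl⟩
  exact Nat.sSup_mem hne (lev_bdd u)

lemma lev_le_lamR (hS : ∀ e ∈ S, A e.1 e.2) {u : V} (hu : u ∉ cover P) :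
    lev P S u ≤ lamR A P u := by
  obtain ⟨l, hl, hhead, hlen⟩ := lev_spec (S := S) hu
  have : UChain A P l := ⟨⟨hl.1, hl.2.1, hl.2.2.1.imp (fun {a b} h => hS (a, b) h)⟩, hl.2.2.2⟩
  exact hlen ▸ le_csSup (bdd_len _ (fun n ⟨l, hl, _, hlen⟩ => ⟨l, hl.1.nodup, hlen⟩))
    ⟨l, this, hhead, rfl⟩

lemma schain_rtg_cons {a : V} {t : List V} (hl : SChain P S (a :: t)) {u : V}
    (hu : u ∈ a :: t) : Relation.ReflTransGen (fun x y => (x, y) ∈ S) a u := by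
  induction t generalizing a with
  | nil =>
    have : u = a := by simpa using hu
    subst this
    exact Relation.ReflTransGen.refl
  | cons z t' ih =>
    rcases List.mem_cons.mp hu with rfl | hut
    · exact Relation.ReflTransGen.refl
    · have hz : (a, z) ∈ S := (List.isChain_cons_cons.mp hl.2.2.1).1
      have ht : SChain P S (z :: t') :=
        ⟨by simp, (List.nodup_cons.mp hl.2.1).2, (List.isChain_cons_cons.mp hl.2.2.1).2,
          fun x hx => hl.2.2.2 x (List.mem_cons_of_mem _ hx)⟩
      exact Relation.ReflTransGen.head hz (ih ht hut)

lemma schain_rtg {l : List V} (hl : SChain P S l) {v u : V} (hv : l.head? = some v)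
    (hu : u ∈ l) : Relation.ReflTransGen (fun a b => (a, b) ∈ S) v u := by
  rcases l with _ | ⟨a, t⟩
  · cases hu
  · have hav : a = v := by simpa using hv
    exact hav ▸ schain_rtg_cons hl hu

lemma lev_step (hacyc : Acyc S) (hS : ∀ e ∈ S, e.1 ∉ cover P ∧ e.2 ∉ cover P)
    {u v : V} (huv : (u, v) ∈ S) : lev P S v + 1 ≤ lev P S u := by
  have hvU : v ∉ cover P := (hS _ huv).2
  have huU : u ∉ cover P := (hS _ huv).1
  obtain ⟨l, hl, hhead, hlen⟩ := lev_spec (S := S) hvU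
  have hul : u ∉ l := by
    intro hul
    exact hacyc (u, v) huv (schain_rtg hl hhead hul)
  have hcons : SChain P S (u :: l) := by
    refine ⟨by simp, List.nodup_cons.mpr ⟨hul, hl.2.1⟩, ?_, ?_⟩
    · rcases l with _ | ⟨z, t⟩
      · exact absurd rfl hl.1
      · simp only [List.head?_cons, Option.some.injEq] at hhead
        exact List.isChain_cons_cons.mpr ⟨hhead ▸ huv, hl.2.2.1⟩
    · intro x hx
      rcases List.mem_cons.mp hx with rfl | h
      · exact huU
      · exact hl.2.2.2 x h
  have hle : (u :: l).length ≤ lev P S u := le_csSup (lev_bdd u) ⟨u :: l, hcons, rfl, rfl⟩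
  simp only [List.length_cons, hlen] at hle
  omega

lemma lev_mono_rtg (hacyc : Acyc S) (hS : ∀ e ∈ S, e.1 ∉ cover P ∧ e.2 ∉ cover P)
    {v u : V} (h : Relation.ReflTransGen (fun a b => (a, b) ∈ S) v u) :
    lev P S u ≤ lev P S v := by
  induction h using Relation.ReflTransGen.head_induction_on with
  | refl => exact le_refl _
  | head h' _ ih => exact le_trans ih (by have := lev_step hacyc hS h'; omega)

lemma lev_strict_rtg (hacyc : Acyc S) (hS : ∀ e ∈ S, e.1 ∉ cover P ∧ e.2 ∉ cover P)
    {v u : V} (h : Relation.ReflTransGen (fun a b => (a, b) ∈ S) v u) (hne : v ≠ u) :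
    lev P S u + 1 ≤ lev P S v := by
  rcases Relation.ReflTransGen.cases_head h with rfl | ⟨c, hvc, hcu⟩
  · exact absurd rfl hne
  · exact le_trans (by have := lev_mono_rtg hacyc hS hcu; omega) (lev_step hacyc hS hvc)

lemma rtg_insert {e : V × V} {x y : V}
    (h : Relation.ReflTransGen (fun a b => (a, b) ∈ insert e S) x y) :
    Relation.ReflTransGen (fun a b => (a, b) ∈ S) x y ∨
    (Relation.ReflTransGen (fun a b => (a, b) ∈ S) x e.1 ∧
     Relation.ReflTransGen (fun a b => (a, b) ∈ S) e.2 y) := by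
  induction h using Relation.ReflTransGen.head_induction_on with
  | refl => exact Or.inl Relation.ReflTransGen.refl
  | @head a c h' _ ih =>
    rcases Finset.mem_insert.mp h' with he | hS'
    · subst he
      rcases ih with ih | ⟨_, ih2⟩
      · exact Or.inr ⟨Relation.ReflTransGen.refl, ih⟩
      · exact Or.inr ⟨Relation.ReflTransGen.refl, ih2⟩
    · rcases ih with ih | ⟨ih1, ih2⟩
      · exact Or.inl (Relation.ReflTransGen.head hS' ih)
      · exact Or.inr ⟨Relation.ReflTransGen.head hS' ih1, ih2⟩

/-- Gallai–Roy-type level function on the uncovered vertices. -/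
lemma levels_exist (A : V → V → Prop) (P : Finset (List V)) (hirr : Irreflexive A) :
    ∃ levf : V → ℕ,
      (∀ u, u ∉ cover P → 1 ≤ levf u) ∧
      (∀ u, u ∉ cover P → levf u ≤ lamR A P u) ∧
      (∀ u v, u ∉ cover P → v ∉ cover P → A u v → levf u ≠ levf v) := by
  classical
  set arcs : Finset (V × V) :=
    Finset.univ.filter (fun e => A e.1 e.2 ∧ e.1 ∉ cover P ∧ e.2 ∉ cover P) with harcs
  have hcand : ((arcs.powerset).filter Acyc).Nonempty :=
    ⟨∅, Finset.mem_filter.mpr ⟨Finset.mem_powerset.mpr (Finset.empty_subset _),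
      fun e he => absurd he (Finset.notMem_empty e)⟩⟩
  obtain ⟨S, hS, hSmax⟩ := Finset.exists_max_image _ Finset.card hcand
  rw [Finset.mem_filter, Finset.mem_powerset] at hS
  obtain ⟨hSsub, hSacyc⟩ := hS
  have hSarc : ∀ e ∈ S, A e.1 e.2 := by
    intro e he
    have := hSsub he
    rw [harcs, Finset.mem_filter] at this
    exact this.2.1
  have hSU : ∀ e ∈ S, e.1 ∉ cover P ∧ e.2 ∉ cover P := by
    intro e he
    have := hSsub he
    rw [harcs, Finset.mem_filter] at this
    exact this.2.2
  refine ⟨lev P S, fun u hu => one_le_lev hu, fun u hu => lev_le_lamR hSarc hu, ?_⟩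
  intro u v hu hv hA
  have hne : u ≠ v := fun h => hirr u (h ▸ hA)
  by_cases hmem : (u, v) ∈ S
  · have := lev_step hSacyc hSU hmem
    omega
  · have hins : insert (u, v) S ⊆ arcs := by
      intro e he
      rcases Finset.mem_insert.mp he with rfl | h
      · rw [harcs, Finset.mem_filter]
        exact ⟨Finset.mem_univ _, hA, hu, hv⟩
      · exact hSsub h
    have hnacyc : ¬ Acyc (insert (u, v) S) := by
      intro hacyc'
      have hmem' : insert (u, v) S ∈ (arcs.powerset).filter Acyc :=
        Finset.mem_filter.mpr ⟨Finset.mem_powerset.mpr hins, hacyc'⟩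
      have := hSmax _ hmem'
      rw [Finset.card_insert_of_notMem hmem] at this
      omega
    rw [Acyc] at hnacyc
    push_neg at hnacyc
    obtain ⟨e, he, hrtg⟩ := hnacyc
    have hvu : Relation.ReflTransGen (fun a b => (a, b) ∈ S) v u := by
      rcases Finset.mem_insert.mp he with rfl | heS
      · rcases rtg_insert hrtg with h | ⟨_, h2⟩
        · exact h
        · exact h2
      · rcases rtg_insert hrtg with h | ⟨h1, h2⟩
        · exact absurd h (hSacyc e heS)
        · exact Relation.ReflTransGen.trans h2
            (Relation.ReflTransGen.head (by simpa using heS) h1)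
    have := lev_strict_rtg hSacyc hSU hvu hne.symm
    omega

end Part5
section Part6
set_option linter.unusedSectionVars false
variable {V : Type*} [Fintype V] [DecidableEq V]
variable {A : V → V → Prop}

/-- Generic improvement wrapper. -/
lemma improve (k : ℕ) {P old new : Finset (List V)} (hP : IsKPack A k P)
    (hold : old ⊆ P)
    (hpaths : ∀ r ∈ new, IsPath A r)
    (hdn : PDisjoint new)
    (hsep : ∀ r ∈ new, ∀ p ∈ P, p ∉ old → ∀ x ∈ r, x ∉ p)
    (hw : weight new = weight old + 1)
    (hcard : P.card + new.card ≤ k + old.card)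
    (hpends : pends new ⊆ pends P ∪ {v : V | v ∉ cover P}) :
    ∃ Q : Finset (List V), IsKPack A k Q ∧ weight Q = weight P + 1 ∧
      pends Q ⊆ pends P ∪ {v : V | v ∉ cover P} := by
  obtain ⟨h1, h2, h3, h4, h5⟩ := pack_core k hP hold hpaths hdn hsep
  refine ⟨P \ old ∪ new, ⟨by omega, h1, h2⟩, by omega, ?_⟩
  intro x hx
  rcases h4 hx with h | h
  · exact Or.inl h
  · exact hpends h

lemma coloring_singletons {k : ℕ} (hirr : Irreflexive A) (hk : 0 < k)
    {P : Finset (List V)} (hcov : ∀ v : V, v ∈ cover P) :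
    ∃ C : Finset (Finset V), IsColoring A C ∧ OrthoCP k C P := by
  classical
  refine ⟨Finset.univ.image (fun v => ({v} : Finset V)), ⟨?_, ?_, ?_, ?_⟩, ?_⟩
  · intro c hc
    obtain ⟨v, _, rfl⟩ := Finset.mem_image.mp hc
    intro x hx y hy hxy
    simp only [Finset.coe_singleton, Set.mem_singleton_iff] at hx hy
    exact absurd (hx.trans hy.symm) hxy
  · intro c hc
    obtain ⟨v, _, rfl⟩ := Finset.mem_image.mp hc
    exact ⟨v, Finset.mem_singleton_self v⟩
  · intro c hc c' hc' hne
    obtain ⟨v, _, rfl⟩ := Finset.mem_image.mp hc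
    obtain ⟨w, _, rfl⟩ := Finset.mem_image.mp hc'
    rw [Finset.disjoint_left]
    intro x hx hx'
    rw [Finset.mem_singleton] at hx hx'
    exact hne (by rw [← hx, hx'])
  · intro v
    exact ⟨{v}, Finset.mem_image.mpr ⟨v, Finset.mem_univ v, rfl⟩, Finset.mem_singleton_self v⟩
  · intro c hc
    obtain ⟨v, _, rfl⟩ := Finset.mem_image.mp hc
    have hv := hcov v
    obtain ⟨p, hp, hvp⟩ := Finset.mem_biUnion.mp hv
    have hmem : p ∈ P.filter (fun p => ∃ x ∈ ({v} : Finset V), x ∈ p) :=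
      Finset.mem_filter.mpr ⟨hp, v, Finset.mem_singleton_self v, List.mem_toFinset.mp hvp⟩
    have h1 : 1 ≤ (P.filter (fun p => ∃ x ∈ ({v} : Finset V), x ∈ p)).card :=
      Finset.card_pos.mpr ⟨p, hmem⟩
    calc min ({v} : Finset V).card k ≤ ({v} : Finset V).card := min_le_left _ _
    _ = 1 := Finset.card_singleton v
    _ ≤ _ := h1

/-- The r-th vertex from the end of a list. -/
def nthLast (d : V) (p : List V) (r : ℕ) : V := (p.take (p.length + 1 - r)).getLastD d

lemma getLast?_eq_getLastD {l : List V} (h : l ≠ []) (d : V) :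
    l.getLast? = some (l.getLastD d) := by
  rcases l.eq_nil_or_concat with rfl | ⟨t, b, rfl⟩
  · exact absurd rfl h
  · simp

lemma nthLast_decomp (d : V) (p : List V) (r : ℕ) (h1 : 1 ≤ r) (h2 : r ≤ p.length) :
    ∃ p₁ p₂ : List V, p = p₁ ++ p₂ ∧ p₁.getLast? = some (nthLast d p r) ∧
      p₂.length = r - 1 ∧ p₁ = p.take (p.length + 1 - r) := by
  refine ⟨p.take (p.length + 1 - r), p.drop (p.length + 1 - r),
    (List.take_append_drop _ _).symm, ?_, ?_, rfl⟩
  · have hne : p.take (p.length + 1 - r) ≠ [] := by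
      have : 1 ≤ p.length + 1 - r := by omega
      rcases p with _ | ⟨a, t⟩
      · simp at h2; omega
      · rcases Nat.exists_eq_add_of_le this with ⟨m, hm⟩
        rw [hm]; simp
    exact getLast?_eq_getLastD hne d
  · rw [List.length_drop]
    omega

lemma nthLast_mem (d : V) (p : List V) (r : ℕ) (h1 : 1 ≤ r) (h2 : r ≤ p.length) :
    nthLast d p r ∈ p := by
  obtain ⟨p₁, p₂, heq, hlast, _, htake⟩ := nthLast_decomp d p r h1 h2
  have hpre : p₁ <+: p := by rw [htake]; exact List.take_prefix _ _
  exact hpre.subset (List.mem_of_mem_getLast? hlast)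

lemma nthLast_inj (d : V) {p : List V} (hnd : p.Nodup) {r r' : ℕ} (h1 : 1 ≤ r)
    (h2 : r ≤ p.length) (h1' : 1 ≤ r') (h2' : r' ≤ p.length) (hne : r ≠ r') :
    nthLast d p r ≠ nthLast d p r' := by
  -- wlog r' < r: then prefix for r is shorter... (larger r ↔ shorter prefix)
  wlog hlt : r' < r generalizing r r'
  · exact (this h1' h2' h1 h2 (Ne.symm hne) (by omega)).symm
  obtain ⟨p₁, p₂, heq, hlast, hlen, htake⟩ := nthLast_decomp d p r h1 h2
  obtain ⟨q₁, q₂, heq', hlast', hlen', htake'⟩ := nthLast_decomp d p r' h1' h2'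
  intro hcontra
  -- p₁ is a shorter prefix than q₁
  have hp₁len : p₁.length = p.length + 1 - r := by rw [htake, List.length_take]; omega
  have hq₁len : q₁.length = p.length + 1 - r' := by rw [htake', List.length_take]; omega
  have hple : p₁.length ≤ q₁.length := by omega
  have hpq : p₁ = q₁.take p₁.length := by
    rw [hp₁len, htake', List.take_take, htake]
    congr 1
    omega
  have hq₁split : q₁ = p₁ ++ q₁.drop p₁.length := by
    conv_lhs => rw [← List.take_append_drop p₁.length q₁]
    rw [← hpq]
  have hq₁nd : q₁.Nodup := by
    rw [htake']
    exact hnd.sublist (List.take_sublist _ _)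
  have hdropne : q₁.drop p₁.length ≠ [] := by
    intro hnil
    have := congrArg List.length hnil
    simp at this
    omega
  -- nthLast d p r' = getLast of q₁ lies in the drop part
  have hlast'' : q₁.getLast? = (q₁.drop p₁.length).getLast? := by
    conv_lhs => rw [hq₁split]
    exact getLast?_append_of_ne_nil hdropne
  have hmem2 : nthLast d p r' ∈ q₁.drop p₁.length := by
    apply List.mem_of_mem_getLast?
    rw [← hlast'', hlast']
    simp
  have hmem1 : nthLast d p r ∈ p₁ := List.mem_of_mem_getLast? hlast
  rw [hq₁split, List.nodup_append'] at hq₁nd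
  exact hq₁nd.2.2 hmem1 (hcontra ▸ hmem2)

end Part6
section Part7
set_option linter.unusedSectionVars false
variable {V : Type*} [Fintype V] [DecidableEq V]
variable {A : V → V → Prop}

lemma stuck_coloring (hirr : Irreflexive A) {k : ℕ} (hk : 0 < k) {P : Finset (List V)}
    (hP : IsKPack A k P) {u₀ : V} (hu₀ : u₀ ∉ cover P) (hPk : P.card = k)
    (hlong : ∀ p ∈ P, Mchain A P ≤ p.length)
    (hzone : ∀ p ∈ P, ∀ q ∈ P, p ≠ q → ∀ p₁ p₂ : List V, p = p₁ ++ p₂ →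
      p₂.length < Mchain A P → ∀ a, p₁.getLast? = some a → ∀ b ∈ q, ¬ A a b)
    (harcUC : ∀ u, u ∉ cover P → ∀ x ∈ cover P, ¬ A u x)
    (harcCU : ∀ p ∈ P, ∀ p₁ p₂ : List V, p = p₁ ++ p₂ → ∀ a, p₁.getLast? = some a →
      ∀ u, u ∉ cover P → A a u → lamR A P u ≤ p₂.length) :
    ∃ C : Finset (Finset V), IsColoring A C ∧ OrthoCP k C P := by
  classical
  set M := Mchain A P with hM
  have hM1 : 1 ≤ M := by
    have : UChain A P [u₀] := ⟨⟨by simp, by simp, List.isChain_singleton _⟩, by simpa using hu₀⟩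
    simpa using le_Mchain this
  obtain ⟨levf, hlev1, hlev2, hlev3⟩ := levels_exist A P hirr
  have hlevM : ∀ u, u ∉ cover P → levf u ≤ M := fun u hu =>
    le_trans (hlev2 u hu) (lamR_le_Mchain hu)
  have hPne : P.Nonempty := Finset.card_pos.mp (by omega)
  -- class pieces
  set Bset : ℕ → Finset V := fun r => Finset.univ.filter (fun u => u ∉ cover P ∧ levf u = r)
    with hBdef
  set Cls : ℕ → Finset V := fun r => Bset r ∪ P.image (fun p => nthLast u₀ p r) with hCdef
  set Tall : Finset V := (Finset.Icc 1 M).biUnion (fun r => P.image (fun p => nthLast u₀ p r))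
    with hTdef
  set Rest : Finset V := cover P \ Tall with hRdef
  set CC : Finset (Finset V) :=
    (Finset.Icc 1 M).image Cls ∪ Rest.image (fun x => ({x} : Finset V)) with hCCdef
  -- basic facts
  have hrb : ∀ r, 1 ≤ r → r ≤ M → ∀ p ∈ P, 1 ≤ r ∧ r ≤ p.length :=
    fun r h1 h2 p hp => ⟨h1, le_trans h2 (hlong p hp)⟩
  have htrmem : ∀ r, 1 ≤ r → r ≤ M → ∀ p ∈ P, nthLast u₀ p r ∈ p := by
    intro r h1 h2 p hp
    exact nthLast_mem u₀ p r h1 (le_trans h2 (hlong p hp))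
  have htrcov : ∀ r, 1 ≤ r → r ≤ M → ∀ p ∈ P, nthLast u₀ p r ∈ cover P :=
    fun r h1 h2 p hp => mem_cover hp (htrmem r h1 h2 p hp)
  -- membership in Cls characterization
  have hClsmem : ∀ r x, x ∈ Cls r ↔ ((x ∉ cover P ∧ levf x = r) ∨ ∃ p ∈ P, nthLast u₀ p r = x) := by
    intro r x
    rw [hCdef]
    simp only [Finset.mem_union, Finset.mem_filter, Finset.mem_univ, true_and,
      Finset.mem_image, hBdef]
  -- no arc inside a class
  have hnoArc : ∀ r, 1 ≤ r → r ≤ M → ∀ x ∈ Cls r, ∀ y ∈ Cls r, ¬ A x y := by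
    intro r h1 h2 x hx y hy hA
    rcases (hClsmem r x).mp hx with ⟨hxu, hxl⟩ | ⟨p, hp, hxp⟩
    · rcases (hClsmem r y).mp hy with ⟨hyu, hyl⟩ | ⟨q, hq, hyq⟩
      · exact hlev3 x y hxu hyu hA (by rw [hxl, hyl])
      · exact harcUC x hxu y (hyq ▸ htrcov r h1 h2 q hq) hA
    · rcases (hClsmem r y).mp hy with ⟨hyu, hyl⟩ | ⟨q, hq, hyq⟩
      · -- arc from transversal vertex into uncovered: contradicts level bound
        obtain ⟨p₁, p₂, heq, hlast, hlen, _⟩ :=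
          nthLast_decomp u₀ p r h1 (le_trans h2 (hlong p hp))
        have := harcCU p hp p₁ p₂ heq _ hlast y hyu (hxp ▸ hA)
        have h2' := hlev2 y hyu
        omega
      · by_cases hpq : p = q
        · subst hpq
          rw [← hxp, ← hyq] at hA
          exact hirr _ hA
        · obtain ⟨p₁, p₂, heq, hlast, hlen, _⟩ :=
            nthLast_decomp u₀ p r h1 (le_trans h2 (hlong p hp))
          exact hzone p hp q hq hpq p₁ p₂ heq (by omega) _ hlast y
            (hyq ▸ htrmem r h1 h2 q hq) (hxp ▸ hA)
  -- cross-class disjointness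
  have hdisjCls : ∀ r, 1 ≤ r → r ≤ M → ∀ r', 1 ≤ r' → r' ≤ M → r ≠ r' →
      ∀ x, x ∈ Cls r → x ∈ Cls r' → False := by
    intro r hr1 hr2 r' hr1' hr2' hne x hx hx'
    rcases (hClsmem r x).mp hx with ⟨hxu, hxl⟩ | ⟨p, hp, hxp⟩
    · rcases (hClsmem r' x).mp hx' with ⟨hyu, hyl⟩ | ⟨q, hq, hyq⟩
      · exact hne (by rw [← hxl, ← hyl])
      · exact hxu (hyq ▸ htrcov r' hr1' hr2' q hq)
    · rcases (hClsmem r' x).mp hx' with ⟨hyu, hyl⟩ | ⟨q, hq, hyq⟩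
      · exact hyu (hxp ▸ htrcov r hr1 hr2 p hp)
      · by_cases hpq : p = q
        · subst hpq
          exact nthLast_inj u₀ (hP.2.1 p hp).nodup hr1 (le_trans hr2 (hlong p hp))
            hr1' (le_trans hr2' (hlong p hp)) hne (by rw [hxp, hyq])
        · exact hP.2.2 p hp q hq hpq x (hxp ▸ htrmem r hr1 hr2 p hp)
            (hyq ▸ htrmem r' hr1' hr2' q hq)
  -- Rest elements not in any class
  have hRestCls : ∀ x ∈ Rest, ∀ r, 1 ≤ r → r ≤ M → x ∉ Cls r := by
    intro x hx r h1 h2 hmem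
    rw [hRdef, Finset.mem_sdiff] at hx
    rcases (hClsmem r x).mp hmem with ⟨hxu, _⟩ | ⟨p, hp, hxp⟩
    · exact hxu hx.1
    · exact hx.2 (Finset.mem_biUnion.mpr ⟨r, Finset.mem_Icc.mpr ⟨h1, h2⟩,
        Finset.mem_image.mpr ⟨p, hp, hxp⟩⟩)
  refine ⟨CC, ⟨?_, ?_, ?_, ?_⟩, ?_⟩
  · -- stability
    intro c hc
    rw [hCCdef, Finset.mem_union] at hc
    rcases hc with hc | hc
    · obtain ⟨r, hr, rfl⟩ := Finset.mem_image.mp hc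
      rw [Finset.mem_Icc] at hr
      intro x hx y hy hxy hadj
      rcases hadj with h | h
      · exact hnoArc r hr.1 hr.2 x (Finset.mem_coe.mp hx) y (Finset.mem_coe.mp hy) h
      · exact hnoArc r hr.1 hr.2 y (Finset.mem_coe.mp hy) x (Finset.mem_coe.mp hx) h
    · obtain ⟨x, _, rfl⟩ := Finset.mem_image.mp hc
      intro a ha b hb hab
      simp only [Finset.coe_singleton, Set.mem_singleton_iff] at ha hb
      exact absurd (ha.trans hb.symm) hab
  · -- nonempty
    intro c hc
    rw [hCCdef, Finset.mem_union] at hc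
    rcases hc with hc | hc
    · obtain ⟨r, hr, rfl⟩ := Finset.mem_image.mp hc
      rw [Finset.mem_Icc] at hr
      obtain ⟨p, hp⟩ := hPne
      exact ⟨nthLast u₀ p r, (hClsmem r _).mpr (Or.inr ⟨p, hp, rfl⟩)⟩
    · obtain ⟨x, _, rfl⟩ := Finset.mem_image.mp hc
      exact ⟨x, Finset.mem_singleton_self x⟩
  · -- pairwise disjoint
    intro c hc c' hc' hne
    rw [hCCdef, Finset.mem_union] at hc hc'
    rw [Finset.disjoint_left]
    intro x hxc hxc'
    rcases hc with hc | hc <;> rcases hc' with hc' | hc'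
    · obtain ⟨r, hr, rfl⟩ := Finset.mem_image.mp hc
      obtain ⟨r', hr', rfl⟩ := Finset.mem_image.mp hc'
      rw [Finset.mem_Icc] at hr hr'
      by_cases hrr : r = r'
      · exact hne (by rw [hrr])
      · exact hdisjCls r hr.1 hr.2 r' hr'.1 hr'.2 hrr x hxc hxc'
    · obtain ⟨r, hr, rfl⟩ := Finset.mem_image.mp hc
      obtain ⟨y, hy, rfl⟩ := Finset.mem_image.mp hc'
      rw [Finset.mem_Icc] at hr
      rw [Finset.mem_singleton] at hxc'
      subst hxc'
      exact hRestCls x hy r hr.1 hr.2 hxc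
    · obtain ⟨y, hy, rfl⟩ := Finset.mem_image.mp hc
      obtain ⟨r, hr, rfl⟩ := Finset.mem_image.mp hc'
      rw [Finset.mem_Icc] at hr
      rw [Finset.mem_singleton] at hxc
      subst hxc
      exact hRestCls x hy r hr.1 hr.2 hxc'
    · obtain ⟨y, _, rfl⟩ := Finset.mem_image.mp hc
      obtain ⟨y', _, rfl⟩ := Finset.mem_image.mp hc'
      rw [Finset.mem_singleton] at hxc hxc'
      exact hne (by rw [← hxc, ← hxc'])
  · -- covers all vertices
    intro v
    by_cases hv : v ∈ cover P
    · by_cases hvT : v ∈ Tall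
      · rw [hTdef] at hvT
        obtain ⟨r, hr, hvr⟩ := Finset.mem_biUnion.mp hvT
        rw [Finset.mem_Icc] at hr
        obtain ⟨p, hp, hpv⟩ := Finset.mem_image.mp hvr
        refine ⟨Cls r, ?_, (hClsmem r v).mpr (Or.inr ⟨p, hp, hpv⟩)⟩
        rw [hCCdef, Finset.mem_union]
        exact Or.inl (Finset.mem_image.mpr ⟨r, Finset.mem_Icc.mpr hr, rfl⟩)
      · refine ⟨{v}, ?_, Finset.mem_singleton_self v⟩
        rw [hCCdef, Finset.mem_union]
        exact Or.inr (Finset.mem_image.mpr ⟨v, Finset.mem_sdiff.mpr ⟨hv, hvT⟩, rfl⟩)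
    · refine ⟨Cls (levf v), ?_, (hClsmem _ v).mpr (Or.inl ⟨hv, rfl⟩)⟩
      rw [hCCdef, Finset.mem_union]
      exact Or.inl (Finset.mem_image.mpr ⟨levf v,
        Finset.mem_Icc.mpr ⟨hlev1 v hv, hlevM v hv⟩, rfl⟩)
  · -- orthogonality
    intro c hc
    rw [hCCdef, Finset.mem_union] at hc
    rcases hc with hc | hc
    · obtain ⟨r, hr, rfl⟩ := Finset.mem_image.mp hc
      rw [Finset.mem_Icc] at hr
      have hfil : P.filter (fun p => ∃ x ∈ Cls r, x ∈ p) = P := by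
        apply Finset.filter_true_of_mem
        intro p hp
        exact ⟨nthLast u₀ p r, (hClsmem r _).mpr (Or.inr ⟨p, hp, rfl⟩), htrmem r hr.1 hr.2 p hp⟩
      rw [hfil, hPk]
      exact min_le_right _ _
    · obtain ⟨x, hx, rfl⟩ := Finset.mem_image.mp hc
      rw [hRdef, Finset.mem_sdiff] at hx
      obtain ⟨p, hp, hxp⟩ := Finset.mem_biUnion.mp hx.1
      have hmem : p ∈ P.filter (fun p => ∃ y ∈ ({x} : Finset V), y ∈ p) :=
        Finset.mem_filter.mpr ⟨hp, x, Finset.mem_singleton_self x, List.mem_toFinset.mp hxp⟩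
      calc min ({x} : Finset V).card k ≤ 1 := by simp
      _ ≤ _ := Finset.card_pos.mpr ⟨p, hmem⟩

end Part7

/-- Theorem: any k-pack of an in-semicomplete digraph has an orthogonal
coloring or can be turned into a heavier k-pack. -/
theorem stmt7 (A : V → V → Prop) (hirr : Irreflexive A) (hin : InSemicomplete A)
    (k : ℕ) (hk : 0 < k) (P : Finset (List V)) (hP : IsKPack A k P) :
    (∃ C : Finset (Finset V), IsColoring A C ∧ OrthoCP k C P) ∨
    (∃ Q : Finset (List V), IsKPack A k Q ∧ weight Q = weight P + 1 ∧
      pends Q ⊆ pends P ∪ {v : V | v ∉ cover P}) := by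
  classical
  by_cases hcov : ∀ v : V, v ∈ cover P
  · exact Or.inl (coloring_singletons hirr hk hcov)
  push_neg at hcov
  obtain ⟨u₀, hu₀⟩ := hcov
  by_cases hcard : P.card < k
  · -- add the single-vertex path [u₀]
    right
    refine improve k hP (Finset.empty_subset P) ?_ ?_ ?_ ?_ ?_ ?_ (new := {[u₀]})
    · intro r hr
      rw [Finset.mem_singleton] at hr
      subst hr
      exact ⟨by simp, by simp, List.isChain_singleton _⟩
    · intro p hp q hq hne
      rw [Finset.mem_singleton] at hp hq
      exact absurd (hp.trans hq.symm) hne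
    · intro r hr p hp _ x hx
      rw [Finset.mem_singleton] at hr
      subst hr
      have : x = u₀ := by simpa using hx
      subst this
      exact fun hc => hu₀ (mem_cover hp hc)
    · simp [weight]
    · have : ({[u₀]} : Finset (List V)).card = 1 := rfl
      omega
    · rintro x ⟨p, hp, hlast⟩
      rw [Finset.mem_singleton] at hp
      subst hp
      have : u₀ = x := by simpa using hlast
      subst this
      exact Or.inr hu₀
  have hPk : P.card = k := le_antisymm hP.1 (not_lt.mp hcard)
  obtain ⟨lmax, hlmax, hlmaxlen⟩ := Mchain_spec (A := A) ⟨u₀, hu₀⟩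
  have hM1 : 1 ≤ Mchain A P := by
    have : UChain A P [u₀] := ⟨⟨by simp, by simp, List.isChain_singleton _⟩, by simpa using hu₀⟩
    simpa using le_Mchain this
  by_cases hshort : ∃ p ∈ P, p.length < Mchain A P
  · -- replace a short path by a longer chain of uncovered vertices
    right
    obtain ⟨p, hp, hplen⟩ := hshort
    obtain ⟨htk, _⟩ := uchain_take (A := A) (P := P) hlmax (c := p.length + 1) (by omega)
    have hchlen : (lmax.take (p.length + 1)).length = p.length + 1 :=
      length_take_of_le (by omega)
    refine improve k hP (Finset.singleton_subset_iff.mpr hp) ?_ ?_ ?_ ?_ ?_ ?_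
      (new := {lmax.take (p.length + 1)})
    · intro r hr
      rw [Finset.mem_singleton] at hr
      exact hr ▸ htk.1
    · intro a ha b hb hne
      rw [Finset.mem_singleton] at ha hb
      exact absurd (ha.trans hb.symm) hne
    · intro r hr q hq _ x hx
      rw [Finset.mem_singleton] at hr
      subst hr
      exact fun hc => htk.2 x hx (mem_cover hq hc)
    · simp only [weight, Finset.sum_singleton, hchlen]
    · have h1 : ({lmax.take (p.length + 1)} : Finset (List V)).card = 1 := rfl
      have h2 : ({p} : Finset (List V)).card = 1 := rfl
      omega
    · rintro x ⟨q, hq, hlast⟩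
      rw [Finset.mem_singleton] at hq
      subst hq
      exact Or.inr (htk.2 x (List.mem_of_mem_getLast? hlast))
  push_neg at hshort
  by_cases hzone : ∃ p ∈ P, ∃ q ∈ P, p ≠ q ∧ ∃ p₁ p₂ : List V, p = p₁ ++ p₂ ∧
      p₂.length < Mchain A P ∧ ∃ a, p₁.getLast? = some a ∧ ∃ b ∈ q, A a b
  · -- merge two paths via the zigzag lemma and add a chain
    right
    obtain ⟨p, hp, q, hq, hpq, p₁, p₂, heq, hp₂len, a, ha, b, hbq, hab⟩ := hzone
    have hp₁ne : p₁ ≠ [] := by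
      intro h
      rw [h] at ha
      simp at ha
    have hppath := hP.2.1 p hp
    have hp₁path : IsPath A p₁ := isPath_prefix (heq ▸ hppath) hp₁ne
    have hqpath := hP.2.1 q hq
    have hd : ∀ x ∈ p₁, x ∉ q := fun x hx =>
      hP.2.2 p hp q hq hpq x (heq ▸ List.mem_append_left _ hx)
    obtain ⟨R, hRpath, hRmem, hRlen, hRlast⟩ :=
      mzl hin (p₁.length + q.length) p₁ q le_rfl hp₁path hqpath hd a b ha hbq hab
    obtain ⟨hch, _⟩ := uchain_take (A := A) (P := P) hlmax (c := p₂.length + 1) (by omega)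
    have hchlen : (lmax.take (p₂.length + 1)).length = p₂.length + 1 :=
      length_take_of_le (by omega)
    set ch := lmax.take (p₂.length + 1) with hchdef
    have hRcov : ∀ x ∈ R, x ∈ cover P := by
      intro x hx
      rcases (hRmem x).mp hx with h | h
      · exact mem_cover hp (heq ▸ List.mem_append_left _ h)
      · exact mem_cover hq h
    have hRch : R ≠ ch := by
      intro h
      exact hch.2 b (h ▸ (hRmem b).mpr (Or.inr hbq)) (mem_cover hq hbq)
    have holdsub : ({p, q} : Finset (List V)) ⊆ P := by
      intro x hx
      rcases Finset.mem_insert.mp hx with rfl | hx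
      · exact hp
      · exact (Finset.mem_singleton.mp hx) ▸ hq
    have hpnq : p ∉ ({q} : Finset (List V)) := by
      rw [Finset.mem_singleton]; exact hpq
    have hRnch : R ∉ ({ch} : Finset (List V)) := by
      rw [Finset.mem_singleton]; exact hRch
    refine improve k hP holdsub ?_ ?_ ?_ ?_ ?_ ?_ (new := {R, ch})
    · intro r hr
      rcases Finset.mem_insert.mp hr with rfl | hr
      · exact hRpath
      · exact (Finset.mem_singleton.mp hr) ▸ hch.1
    · intro r hr s hs hne x hxr hxs
      have hmem : ∀ t, t ∈ ({R, ch} : Finset (List V)) → t = R ∨ t = ch := by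
        intro t ht
        rcases Finset.mem_insert.mp ht with h | h
        · exact Or.inl h
        · exact Or.inr (Finset.mem_singleton.mp h)
      rcases hmem r hr with rfl | rfl <;> rcases hmem s hs with rfl | rfl
      · exact absurd rfl hne
      · exact hch.2 x hxs (hRcov x hxr)
      · exact hch.2 x hxr (hRcov x hxs)
      · exact absurd rfl hne
    · intro r hr p' hp' hp'old x hxr
      have hp'p : p' ≠ p := fun h => hp'old (h ▸ Finset.mem_insert_self _ _)
      have hp'q : p' ≠ q := fun h => hp'old (h ▸ Finset.mem_insert_of_mem (Finset.mem_singleton_self _))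
      rcases Finset.mem_insert.mp hr with rfl | hr
      · rcases (hRmem x).mp hxr with h | h
        · exact hP.2.2 p hp p' hp' (fun hc => hp'p hc.symm) x (heq ▸ List.mem_append_left _ h)
        · exact hP.2.2 q hq p' hp' (fun hc => hp'q hc.symm) x h
      · rw [Finset.mem_singleton] at hr
        subst hr
        exact fun hc => hch.2 x hxr (mem_cover hp' hc)
    · have hplen : p.length = p₁.length + p₂.length := by
        rw [heq, List.length_append]
      have hwnew : weight {R, ch} = R.length + ch.length := by
        rw [weight, Finset.sum_insert hRnch, Finset.sum_singleton]
      have hwold : weight ({p, q} : Finset (List V)) = p.length + q.length := by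
        rw [weight, Finset.sum_insert hpnq, Finset.sum_singleton]
      rw [hwnew, hwold, hRlen, hchlen]
      omega
    · have h1 : ({R, ch} : Finset (List V)).card = 2 := Finset.card_insert_of_notMem hRnch
      have h2 : ({p, q} : Finset (List V)).card = 2 := Finset.card_insert_of_notMem hpnq
      omega
    · rintro x ⟨s, hs, hlast⟩
      rcases Finset.mem_insert.mp hs with rfl | hs
      · exact Or.inl ⟨q, hq, hRlast ▸ hlast⟩
      · rw [Finset.mem_singleton] at hs
        subst hs
        exact Or.inr (hch.2 x (List.mem_of_mem_getLast? hlast))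
  push_neg at hzone
  by_cases harcUC : ∃ u, u ∉ cover P ∧ ∃ x ∈ cover P, A u x
  · -- insert an uncovered vertex into a path via the zigzag lemma
    right
    obtain ⟨u, hu, x, hxcov, hux⟩ := harcUC
    obtain ⟨q, hq, hxq'⟩ := Finset.mem_biUnion.mp hxcov
    have hxq := List.mem_toFinset.mp hxq'
    have hqpath := hP.2.1 q hq
    have hd : ∀ y ∈ [u], y ∉ q := by
      intro y hy
      have : y = u := by simpa using hy
      subst this
      exact fun hc => hu (mem_cover hq hc)
    obtain ⟨R, hRpath, hRmem, hRlen, hRlast⟩ :=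
      mzl hin (1 + q.length) [u] q (by simp) ⟨by simp, by simp, List.isChain_singleton _⟩ hqpath hd u x
        (by simp) hxq hux
    refine improve k hP (Finset.singleton_subset_iff.mpr hq) ?_ ?_ ?_ ?_ ?_ ?_ (new := {R})
    · intro r hr
      rw [Finset.mem_singleton] at hr
      exact hr ▸ hRpath
    · intro a ha b hb hne
      rw [Finset.mem_singleton] at ha hb
      exact absurd (ha.trans hb.symm) hne
    · intro r hr p' hp' hp'old y hyr
      rw [Finset.mem_singleton] at hr
      subst hr
      have hp'q : p' ≠ q := fun h => hp'old (h ▸ Finset.mem_singleton_self _)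
      rcases (hRmem y).mp hyr with h | h
      · have : y = u := by simpa using h
        subst this
        exact fun hc => hu (mem_cover hp' hc)
      · exact hP.2.2 q hq p' hp' (fun hc => hp'q hc.symm) y h
    · simp only [weight, Finset.sum_singleton, hRlen, List.length_singleton]
      omega
    · have h1 : ({R} : Finset (List V)).card = 1 := rfl
      have h2 : ({q} : Finset (List V)).card = 1 := rfl
      omega
    · rintro y ⟨s, hs, hlast⟩
      rw [Finset.mem_singleton] at hs
      subst hs
      exact Or.inl ⟨q, hq, hRlast ▸ hlast⟩
  push_neg at harcUC
  by_cases harcCU : ∃ p ∈ P, ∃ p₁ p₂ : List V, p = p₁ ++ p₂ ∧ ∃ a, p₁.getLast? = some a ∧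
      ∃ u, u ∉ cover P ∧ A a u ∧ p₂.length < lamR A P u
  · -- reroute a path's tail into a chain of uncovered vertices
    right
    obtain ⟨p, hp, p₁, p₂, heq, a, ha, u, hu, hau, hlam⟩ := harcCU
    obtain ⟨l, hlch, hlhead, hllen⟩ := lamR_spec (A := A) hu
    obtain ⟨hcht, hchthead⟩ := uchain_take (A := A) (P := P) hlch (c := p₂.length + 1) (by omega)
    have hchtlen : (l.take (p₂.length + 1)).length = p₂.length + 1 :=
      length_take_of_le (by omega)
    set cht := l.take (p₂.length + 1) with hchtdef
    have hchthead' : cht.head? = some u := by rw [hchthead, hlhead]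
    have hp₁ne : p₁ ≠ [] := by
      intro h
      rw [h] at ha
      simp at ha
    have hppath := hP.2.1 p hp
    have hp₁path : IsPath A p₁ := isPath_prefix (heq ▸ hppath) hp₁ne
    have hp₁cov : ∀ x ∈ p₁, x ∈ cover P := fun x hx =>
      mem_cover hp (heq ▸ List.mem_append_left _ hx)
    have hrpath : IsPath A (p₁ ++ cht) :=
      isPath_append hp₁path hcht.1 (fun x hx hc => hcht.2 x hc (hp₁cov x hx)) ha hchthead' hau
    have hchtne : cht ≠ [] := hcht.1.ne_nil
    refine improve k hP (Finset.singleton_subset_iff.mpr hp) ?_ ?_ ?_ ?_ ?_ ?_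
      (new := {p₁ ++ cht})
    · intro r hr
      rw [Finset.mem_singleton] at hr
      exact hr ▸ hrpath
    · intro a' ha' b hb hne
      rw [Finset.mem_singleton] at ha' hb
      exact absurd (ha'.trans hb.symm) hne
    · intro r hr p' hp' hp'old x hxr
      rw [Finset.mem_singleton] at hr
      subst hr
      have hp'p : p' ≠ p := fun h => hp'old (h ▸ Finset.mem_singleton_self _)
      rcases List.mem_append.mp hxr with h | h
      · exact hP.2.2 p hp p' hp' (fun hc => hp'p hc.symm) x (heq ▸ List.mem_append_left _ h)
      · exact fun hc => hcht.2 x h (mem_cover hp' hc)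
    · have hplen : p.length = p₁.length + p₂.length := by
        rw [heq, List.length_append]
      simp only [weight, Finset.sum_singleton, List.length_append, hchtlen]
      omega
    · have h1 : ({p₁ ++ cht} : Finset (List V)).card = 1 := rfl
      have h2 : ({p} : Finset (List V)).card = 1 := rfl
      omega
    · rintro y ⟨s, hs, hlast⟩
      rw [Finset.mem_singleton] at hs
      subst hs
      rw [getLast?_append_of_ne_nil hchtne] at hlast
      exact Or.inr (hcht.2 y (List.mem_of_mem_getLast? hlast))
  push_neg at harcCU
  exact Or.inl (stuck_coloring hirr hk hP hu₀ hPk hshort hzone harcUC harcCU)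

end DigraphPaper
end

section
/- If P is an optimal k-pack of an out-semicomplete digraph D, then there exists a coloring of D orthogonal to P. -/
open scoped Classical

namespace DigraphPaper

variable {V : Type*} [Fintype V] [DecidableEq V]

/-! ### Auxiliary lemmas -/

set_option linter.unusedSectionVars false

/-- Merging two paths with adjacent heads (out-semicompleteness). -/
lemma aux_zip {A : V → V → Prop} (hout : OutSemicomplete A) :
    ∀ (n : ℕ) (a : V) (p' : List V) (b : V) (q' : List V),
      p'.length + q'.length ≤ n →
      (a :: p').Chain' A → (b :: q').Chain' A → ((a :: p') ++ (b :: q')).Nodup →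
      A a b →
      ∃ z : List V, z.Perm ((a :: p') ++ (b :: q')) ∧ z.Chain' A ∧ z.head? = some a := by
  intro n
  induction n with
  | zero =>
    intro a p' b q' hlen hcp hcq hnd hab
    have hp' : p' = [] := by
      cases p' with
      | nil => rfl
      | cons c p'' => simp at hlen
    subst hp'
    exact ⟨a :: b :: q', List.Perm.refl _, List.isChain_cons_cons.mpr ⟨hab, hcq⟩, rfl⟩
  | succ n ih =>
    intro a p' b q' hlen hcp hcq hnd hab
    cases p' with
    | nil =>
      exact ⟨a :: b :: q', List.Perm.refl _, List.isChain_cons_cons.mpr ⟨hab, hcq⟩, rfl⟩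
    | cons c p'' =>
      have hac : A a c := (List.isChain_cons_cons.mp hcp).1
      have hcp' : (c :: p'').Chain' A := (List.isChain_cons_cons.mp hcp).2
      have hndtail : ((c :: p'') ++ (b :: q')).Nodup := by
        have : (a :: ((c :: p'') ++ (b :: q'))).Nodup := by simpa using hnd
        exact this.of_cons
      have hcb : c ≠ b := by
        intro h
        have h1 : c ∉ b :: q' := (List.nodup_append'.mp hndtail).2.2 (by simp)
        exact h1 (by simp [h])
      rcases hout a c b hac hab hcb with hcase | hcase
      · obtain ⟨z', hz'p, hz'c, hz'h⟩ := ih c p'' b q' (by simp at hlen ⊢; omega)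
          hcp' hcq hndtail hcase
        refine ⟨a :: z', hz'p.cons a, ?_, rfl⟩
        refine List.isChain_cons.mpr ⟨?_, hz'c⟩
        intro y hy
        rw [hz'h] at hy
        simp at hy
        rw [← hy]; exact hac
      · have hndq : ((b :: q') ++ (c :: p'')).Nodup :=
          (List.perm_append_comm.nodup_iff).mpr hndtail
        obtain ⟨z', hz'p, hz'c, hz'h⟩ := ih b q' c p'' (by simp at hlen ⊢; omega)
          hcq hcp' hndq hcase
        refine ⟨a :: z', ?_, ?_, rfl⟩
        · exact (hz'p.cons a).trans ((List.perm_append_comm).cons a)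
        · refine List.isChain_cons.mpr ⟨?_, hz'c⟩
          intro y hy
          rw [hz'h] at hy
          simp at hy
          rw [← hy]; exact hab

lemma aux_chain_transGen {R : V → V → Prop} :
    ∀ {l : List V} {a b : V}, List.Chain R a l → b ∈ l → Relation.TransGen R a b := by
  intro l
  induction l with
  | nil => intro a b _ hb; simp at hb
  | cons c t ih =>
    intro a b hch hb
    rcases List.chain_cons.mp hch with ⟨hac, hct⟩
    rcases List.mem_cons.mp hb with h | h
    · subst h; exact Relation.TransGen.single hac
    · exact (Relation.TransGen.single hac).trans (ih hct h)

lemma aux_nodup_of_chain' {R : V → V → Prop} (hirr : Irreflexive (Relation.TransGen R)) :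
    ∀ {l : List V}, l.Chain' R → l.Nodup := by
  intro l
  induction l with
  | nil => intro _; exact List.nodup_nil
  | cons x t ih =>
    intro hch
    have hch' : List.Chain R x t := hch
    have htl : t.Chain' R := hch.tail
    refine List.nodup_cons.mpr ⟨?_, ih htl⟩
    intro hx
    exact hirr x (aux_chain_transGen hch' hx)

lemma aux_rtg_union {R : V → V → Prop} {u w x y : V}
    (h : Relation.ReflTransGen (fun a b => R a b ∨ (a = u ∧ b = w)) x y) :
    Relation.ReflTransGen R x y ∨
      (Relation.ReflTransGen R x u ∧ Relation.ReflTransGen R w y) := by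
  induction h with
  | refl => exact Or.inl Relation.ReflTransGen.refl
  | tail hac hcb ih =>
    rcases hcb with hR | ⟨hc, hb⟩
    · rcases ih with h1 | ⟨h1, h2⟩
      · exact Or.inl (h1.tail hR)
      · exact Or.inr ⟨h1, h2.tail hR⟩
    · subst hc; subst hb
      rcases ih with h1 | ⟨h1, _⟩
      · exact Or.inr ⟨h1, Relation.ReflTransGen.refl⟩
      · exact Or.inr ⟨h1, Relation.ReflTransGen.refl⟩

lemma aux_cycle {R : V → V → Prop} (hirr : Irreflexive (Relation.TransGen R)) {u w x : V}
    (h : Relation.TransGen (fun a b => R a b ∨ (a = u ∧ b = w)) x x) :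
    Relation.ReflTransGen R w u := by
  obtain ⟨m, hxm, hmx⟩ := (Relation.TransGen.tail'_iff).mp h
  rcases aux_rtg_union hxm with h1 | ⟨h1, h2⟩ <;> rcases hmx with hR | ⟨hm, hx⟩
  · -- R m x and RTG R x m : cycle in R, contradiction
    rcases Relation.reflTransGen_iff_eq_or_transGen.mp h1 with he | ht
    · subst he; exact absurd (Relation.TransGen.single hR) (hirr _)
    · exact absurd (ht.tail hR) (hirr x)
  · subst hm hx; exact h1
  · exact (h2.tail hR).trans h1
  · subst hm hx; exact h2

lemma aux_mem_cover {P : Finset (List V)} {x : V} : x ∈ cover P ↔ ∃ p ∈ P, x ∈ p := by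
  simp [cover]

lemma aux_chain'_take {A : V → V → Prop} {l : List V} (h : l.Chain' A) (n : ℕ) :
    (l.take n).Chain' A := by
  have h2 : (l.take n ++ l.drop n).Chain' A := by rw [List.take_append_drop]; exact h
  exact (List.isChain_append.mp h2).1

lemma aux_chain'_drop {A : V → V → Prop} {l : List V} (h : l.Chain' A) (n : ℕ) :
    (l.drop n).Chain' A := by
  have h2 : (l.take n ++ l.drop n).Chain' A := by rw [List.take_append_drop]; exact h
  exact (List.isChain_append.mp h2).2.1

/-- Master exchange lemma: replacing the subfamily `P₀` of an optimal k-pack `P`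
by a family `R` of paths disjoint from the rest cannot increase total weight. -/
lemma aux_opt_le {A : V → V → Prop} {k : ℕ} {P : Finset (List V)} (hP : OptimalKPack A k P)
    (P₀ : Finset (List V)) (hP₀ : P₀ ⊆ P) (R : Finset (List V))
    (hRpath : ∀ r ∈ R, IsPath A r) (hRdisj : PDisjoint R)
    (hRP : ∀ r ∈ R, ∀ q ∈ P, q ∉ P₀ → ∀ x ∈ r, x ∉ q)
    (hcard : R.card + (P.card - P₀.card) ≤ k) :
    ∑ r ∈ R, r.length ≤ ∑ p ∈ P₀, p.length := by
  obtain ⟨⟨hle, hpaths, hdisj⟩, hopt⟩ := hP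
  have hdisjPR : Disjoint (P \ P₀) R := by
    rw [Finset.disjoint_right]
    intro r hrR hrP
    obtain ⟨hrmem, hrnot⟩ := Finset.mem_sdiff.mp hrP
    obtain ⟨x, hx⟩ := List.exists_mem_of_ne_nil r (hRpath r hrR).1
    exact hRP r hrR r hrmem hrnot x hx hx
  set Q : Finset (List V) := (P \ P₀) ∪ R with hQ
  have hQpack : IsKPack A k Q := by
    refine ⟨?_, ?_, ?_⟩
    · rw [Finset.card_union_of_disjoint hdisjPR, Finset.card_sdiff_of_subset hP₀]
      omega
    · intro p hp
      rcases Finset.mem_union.mp hp with h | h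
      · exact hpaths p (Finset.mem_sdiff.mp h).1
      · exact hRpath p h
    · intro p hp q hq hne x hxp
      rcases Finset.mem_union.mp hp with h1 | h1 <;> rcases Finset.mem_union.mp hq with h2 | h2
      · exact hdisj p (Finset.mem_sdiff.mp h1).1 q (Finset.mem_sdiff.mp h2).1 hne x hxp
      · intro hxq
        exact hRP q h2 p (Finset.mem_sdiff.mp h1).1 (Finset.mem_sdiff.mp h1).2 x hxq hxp
      · exact hRP p h1 q (Finset.mem_sdiff.mp h2).1 (Finset.mem_sdiff.mp h2).2 x hxp
      · exact hRdisj p h1 q h2 hne x hxp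
  have hw : weight Q = ∑ p ∈ P \ P₀, p.length + ∑ r ∈ R, r.length := by
    rw [hQ]; exact Finset.sum_union hdisjPR
  have hsplit : ∑ p ∈ P \ P₀, p.length + ∑ p ∈ P₀, p.length = weight P :=
    Finset.sum_sdiff hP₀
  have := hopt Q hQpack
  omega

lemma aux_chain'_memU {R : V → V → Prop} {U : Finset V}
    (hR : ∀ a b, R a b → a ∈ U ∧ b ∈ U) :
    ∀ {l : List V} {u : V}, l.Chain' R → l.getLast? = some u → u ∈ U → ∀ x ∈ l, x ∈ U := by
  intro l
  induction l with
  | nil => intro u _ h _ x hx; simp at hx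
  | cons c t ih =>
    intro u hch hlast hu x hx
    cases t with
    | nil =>
      simp at hlast hx
      rw [hx, hlast]; exact hu
    | cons d t' =>
      have hcd : R c d := (List.isChain_cons_cons.mp hch).1
      have hch' : (d :: t').Chain' R := (List.isChain_cons_cons.mp hch).2
      have hlast' : (d :: t').getLast? = some u := by
        rw [List.getLast?_cons_cons] at hlast; exact hlast
      rcases List.mem_cons.mp hx with h | h
      · rw [h]; exact (hR c d hcd).1
      · exact ih hch' hlast' hu x h

/-- Gallai–Roy style levelling on the subdigraph induced on `U`. -/
lemma aux_gallai_roy (A : V → V → Prop) (hirr : Irreflexive A) (U : Finset V) :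
    ∃ lev : V → ℕ,
      (∀ u ∈ U, 1 ≤ lev u) ∧
      (∀ u ∈ U, ∃ q : List V, q.Chain' A ∧ (∀ x ∈ q, x ∈ U) ∧ q.Nodup ∧
        q.getLast? = some u ∧ q.length = lev u) ∧
      (∀ u ∈ U, ∀ w ∈ U, A u w → lev u ≠ lev w) := by
  classical
  -- arcs within U
  set B : Finset (V × V) :=
    Finset.univ.filter (fun e => e.1 ∈ U ∧ e.2 ∈ U ∧ A e.1 e.2) with hB
  set fam : Finset (Finset (V × V)) :=
    B.powerset.filter (fun F => Irreflexive (Relation.TransGen (fun a b => (a, b) ∈ F))) with hfam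
  have hfamne : fam.Nonempty := by
    refine ⟨∅, Finset.mem_filter.mpr ⟨Finset.mem_powerset.mpr (Finset.empty_subset _), ?_⟩⟩
    have hgen : ∀ a b : V, Relation.TransGen (fun a b => (a, b) ∈ (∅ : Finset (V × V))) a b → False := by
      intro a b h
      induction h with
      | single h => simp at h
      | tail _ h _ => simp at h
    exact fun x hx => hgen x x hx
  obtain ⟨F, hFfam, hFmax⟩ := Finset.exists_max_image fam Finset.card hfamne
  have hFB : F ⊆ B := Finset.mem_powerset.mp (Finset.mem_filter.mp hFfam).1
  set RF : V → V → Prop := fun a b => (a, b) ∈ F with hRF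
  have hFacy : Irreflexive (Relation.TransGen RF) := (Finset.mem_filter.mp hFfam).2
  have hRFU : ∀ a b, RF a b → a ∈ U ∧ b ∈ U := by
    intro a b hab
    have := hFB hab
    rw [hB] at this
    simp at this
    exact ⟨this.1, this.2.1⟩
  have hRFA : ∀ a b, RF a b → A a b := by
    intro a b hab
    have := hFB hab
    rw [hB] at this
    simp at this
    exact this.2.2
  -- the level function
  set levSet : V → Set ℕ := fun u =>
    {m | ∃ q : List V, q.Chain' RF ∧ q.getLast? = some u ∧ q.length = m} with hlevSet
  have hbdd : ∀ u, BddAbove (levSet u) := by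
    intro u
    refine ⟨Fintype.card V, ?_⟩
    rintro m ⟨q, hq, _, rfl⟩
    exact (aux_nodup_of_chain' hFacy hq).length_le_card
  have hlevne : ∀ u, (levSet u).Nonempty := by
    intro u
    exact ⟨1, [u], List.isChain_singleton u, rfl, rfl⟩
  set lev : V → ℕ := fun u => sSup (levSet u) with hlev
  have hwit : ∀ u, ∃ q : List V, q.Chain' RF ∧ q.getLast? = some u ∧ q.length = lev u :=
    fun u => Nat.sSup_mem (hlevne u) (hbdd u)
  have hlevlt : ∀ a b, RF a b → lev a < lev b := by
    intro a b hab
    obtain ⟨q, hq, hlast, hlen⟩ := hwit a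
    have hq' : (q ++ [b]).Chain' RF := by
      unfold List.Chain'; rw [List.isChain_append]
      refine ⟨hq, List.isChain_singleton b, ?_⟩
      intro x hx y hy
      simp at hy
      rw [hlast] at hx
      simp at hx
      rw [← hx, ← hy]; exact hab
    have hmem : lev a + 1 ∈ levSet b :=
      ⟨q ++ [b], hq', by simp, by simp [hlen]⟩
    have h2 := le_csSup (hbdd b) hmem
    exact Nat.lt_of_lt_of_le (Nat.lt_succ_self _) h2
  have hlevmono : ∀ a b, Relation.TransGen RF a b → lev a < lev b := by
    intro a b h
    induction h with
    | single h => exact hlevlt _ _ h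
    | tail _ h ih => exact ih.trans (hlevlt _ _ h)
  refine ⟨lev, ?_, ?_, ?_⟩
  · intro u _
    have : (1 : ℕ) ∈ levSet u := ⟨[u], List.isChain_singleton u, rfl, rfl⟩
    exact le_csSup (hbdd u) this
  · intro u hu
    obtain ⟨q, hq, hlast, hlen⟩ := hwit u
    exact ⟨q, List.IsChain.imp (fun a b h => hRFA a b h) hq,
      aux_chain'_memU hRFU hq hlast hu, aux_nodup_of_chain' hFacy hq, hlast, hlen⟩
  · intro u hu w hw hA
    have huw : u ≠ w := fun h => hirr u (h ▸ hA)
    by_cases hmem : (u, w) ∈ F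
    · exact (hlevlt u w hmem).ne
    · -- by maximality, adding (u,w) creates a cycle
      have hBuw : (u, w) ∈ B := by
        rw [hB]; simp [hu, hw, hA]
      have hnot : insert (u, w) F ∉ fam := by
        intro hmem'
        have h1 := hFmax _ hmem'
        rw [Finset.card_insert_of_notMem hmem] at h1
        omega
      have hnotirr : ¬ Irreflexive (Relation.TransGen (fun a b => (a, b) ∈ insert (u, w) F)) := by
        intro hirr'
        exact hnot (Finset.mem_filter.mpr
          ⟨Finset.mem_powerset.mpr (Finset.insert_subset hBuw hFB), hirr'⟩)
      rw [Irreflexive] at hnotirr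
      push_neg at hnotirr
      obtain ⟨x, hx⟩ := hnotirr
      have hx' : Relation.TransGen (fun a b => RF a b ∨ (a = u ∧ b = w)) x x := by
        refine Relation.TransGen.mono ?_ _ _ hx
        intro a b hab
        rcases Finset.mem_insert.mp hab with h | h
        · exact Or.inr ⟨congrArg Prod.fst h, congrArg Prod.snd h⟩
        · exact Or.inl h
      have hrtg : Relation.ReflTransGen RF w u := aux_cycle hFacy hx'
      rcases Relation.reflTransGen_iff_eq_or_transGen.mp hrtg with he | ht
      · exact absurd he huw
      · exact (hlevmono w u ht).ne'

lemma aux_chain'_arc {A : V → V → Prop} {p : List V} (h : p.Chain' A) {i : ℕ}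
    (hi : i + 1 < p.length) : A (p[i]'(by omega)) (p[i+1]'hi) := by
  have := List.isChain_iff_getElem.mp h i (by omega)
  simpa [List.get_eq_getElem] using this

/-- No arc from a covered vertex to an uncovered vertex. -/
lemma aux_F1 {A : V → V → Prop} {k : ℕ} {P : Finset (List V)}
    (hout : OutSemicomplete A) (hP : OptimalKPack A k P)
    {p : List V} (hp : p ∈ P) {u : V} (hu : u ∉ cover P) :
    ∀ x ∈ p, ¬ A x u := by
  have hpath := hP.1.2.1 p hp
  have hdisj := hP.1.2.2
  have hcardle := hP.1.1
  have hcardpos : 1 ≤ P.card := Finset.card_pos.mpr ⟨p, hp⟩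
  have hunotq : ∀ q ∈ P, u ∉ q := fun q hq hin => hu (aux_mem_cover.mpr ⟨q, hq, hin⟩)
  have hunotp : u ∉ p := hunotq p hp
  by_contra hcon
  push_neg at hcon
  obtain ⟨x, hx, hAxu⟩ := hcon
  -- generic exchange: a replacement path of length `p.length + 1` gives a contradiction
  have hexch : ∀ r : List V, IsPath A r → (∀ y ∈ r, y ∈ p ∨ y = u) →
      r.length = p.length + 1 → False := by
    intro r hr hsub hlen
    have hle := aux_opt_le hP {p} (Finset.singleton_subset_iff.mpr hp) {r}
      (by intro r' hr'; rw [Finset.mem_singleton] at hr'; subst hr'; exact hr)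
      (by intro a ha b hb hne; rw [Finset.mem_singleton] at ha hb; subst ha; subst hb
          exact absurd rfl hne)
      (by intro r' hr' s hs hsne y hyr
          rw [Finset.mem_singleton] at hr'; subst hr'
          have hsnep : s ≠ p := by simpa using hsne
          rcases hsub y hyr with h | h
          · exact fun hyq => hdisj s hs p hp hsnep y hyq h
          · subst h; exact hunotq s hs)
      (by simp only [Finset.card_singleton]; omega)
    simp only [Finset.sum_singleton] at hle
    omega
  set I : Finset (Fin p.length) :=
    Finset.univ.filter (fun i => A (p[(i : ℕ)]'i.isLt) u) with hI
  have hIne : I.Nonempty := by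
    obtain ⟨i, hi, hieq⟩ := List.mem_iff_getElem.mp hx
    exact ⟨⟨i, hi⟩, Finset.mem_filter.mpr ⟨Finset.mem_univ _, by simpa [hieq] using hAxu⟩⟩
  obtain ⟨i, hiI, himax⟩ := Finset.exists_max_image I (fun i => (i : ℕ)) hIne
  have hAiu : A (p[(i : ℕ)]'i.isLt) u := (Finset.mem_filter.mp hiI).2
  by_cases hlasti : (i : ℕ) + 1 < p.length
  · -- not the last vertex: propagate or insert
    have harc : A (p[(i : ℕ)]'i.isLt) (p[(i : ℕ)+1]'hlasti) := aux_chain'_arc hpath.2.2 hlasti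
    have hne : u ≠ p[(i : ℕ)+1]'hlasti := fun h => hunotp (h ▸ List.getElem_mem hlasti)
    rcases hout _ u _ hAiu harc hne with hcase | hcase
    · -- insert u after position i
      set r : List V := p.take ((i : ℕ)+1) ++ u :: p.drop ((i : ℕ)+1) with hr
      have hperm : r.Perm (u :: p) := by
        have h1 := List.perm_middle (a := u) (l₁ := p.take ((i : ℕ)+1))
          (l₂ := p.drop ((i : ℕ)+1))
        rwa [List.take_append_drop] at h1
      have hnodup : r.Nodup := hperm.symm.nodup (List.nodup_cons.mpr ⟨hunotp, hpath.2.1⟩)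
      have hlen : r.length = p.length + 1 := by
        rw [hperm.length_eq]; simp
      have htake : (p.take ((i : ℕ)+1)).getLast? = some (p[(i : ℕ)]'i.isLt) := by
        rw [List.getLast?_eq_getElem?, List.getElem?_take]
        have hlt : (p.take ((i : ℕ)+1)).length = (i : ℕ) + 1 := by
          rw [List.length_take]; omega
        rw [hlt]
        simp only [Nat.add_sub_cancel, if_pos (Nat.lt_succ_self _)]
        exact List.getElem?_eq_getElem i.isLt
      have hchain : r.Chain' A := by
        rw [hr]; unfold List.Chain'; rw [List.isChain_append]
        refine ⟨aux_chain'_take hpath.2.2 _, ?_, ?_⟩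
        · refine List.isChain_cons.mpr ⟨?_, aux_chain'_drop hpath.2.2 _⟩
          intro y hy
          rw [List.head?_drop, List.getElem?_eq_getElem hlasti] at hy
          have hy2 : p[(i : ℕ)+1]'hlasti = y := by simpa using hy
          rw [← hy2]; exact hcase
        · intro x' hx' y hy
          rw [htake] at hx'
          have hx2 : p[(i : ℕ)]'i.isLt = x' := by simpa using hx'
          have hy2 : u = y := by simpa using hy
          rw [← hx2, ← hy2]; exact hAiu
      refine hexch r ⟨List.ne_nil_of_length_pos (by omega), hnodup, hchain⟩ ?_ hlen
      intro y hy
      have := hperm.mem_iff.mp hy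
      simp at this
      tauto
    · -- propagate: contradicts maximality of i
      have hmem : (⟨(i : ℕ)+1, hlasti⟩ : Fin p.length) ∈ I :=
        Finset.mem_filter.mpr ⟨Finset.mem_univ _, hcase⟩
      have := himax _ hmem
      simp at this
  · -- last vertex: extend the path by u
    set r : List V := p ++ [u] with hr
    have hnodup : r.Nodup := by
      rw [hr, List.nodup_append']
      exact ⟨hpath.2.1, List.nodup_singleton u, by
        intro a ha hb
        simp at hb
        subst hb
        exact hunotp ha⟩
    have hchain : r.Chain' A := by
      rw [hr]; unfold List.Chain'; rw [List.isChain_append]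
      refine ⟨hpath.2.2, List.isChain_singleton u, ?_⟩
      intro x' hx' y hy
      have hy2 : u = y := by simpa using hy
      rw [List.getLast?_eq_getElem?] at hx'
      have hplen : p.length - 1 = (i : ℕ) := by
        have := i.isLt; omega
      rw [hplen, List.getElem?_eq_getElem i.isLt] at hx'
      have hx2 : p[(i : ℕ)]'i.isLt = x' := by simpa using hx'
      rw [← hx2, ← hy2]; exact hAiu
    refine hexch r ⟨by simp [hr, hpath.1], hnodup, hchain⟩ ?_ (by simp [hr])
    intro y hy
    simp [hr] at hy
    tauto

/-- An uncovered path of length `> i` cannot send an arc from its end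
to the `i`-th vertex of a path of the pack. -/
lemma aux_F2 {A : V → V → Prop} {k : ℕ} {P : Finset (List V)} (hP : OptimalKPack A k P)
    {w : List V} (hwpath : IsPath A w) (hwU : ∀ x ∈ w, x ∉ cover P)
    {u : V} (hlast : w.getLast? = some u)
    {p : List V} (hp : p ∈ P) {i : ℕ} (hiw : i < w.length) (hip : i < p.length) :
    ¬ A u (p[i]'hip) := by
  intro hA
  have hpath := hP.1.2.1 p hp
  have hdisj := hP.1.2.2
  have hcardle := hP.1.1
  have hcardpos : 1 ≤ P.card := Finset.card_pos.mpr ⟨p, hp⟩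
  have hwp : ∀ x ∈ w, ∀ q ∈ P, x ∉ q :=
    fun x hx q hq hxq => hwU x hx (aux_mem_cover.mpr ⟨q, hq, hxq⟩)
  set r : List V := w ++ p.drop i with hr
  have hrpath : IsPath A r := by
    refine ⟨by simp [hr, hwpath.1], ?_, ?_⟩
    · rw [hr, List.nodup_append']
      refine ⟨hwpath.2.1, (List.drop_sublist i p).nodup hpath.2.1, ?_⟩
      intro a ha hb
      exact hwp a ha p hp ((List.drop_sublist i p).mem hb)
    · rw [hr]; unfold List.Chain'; rw [List.isChain_append]
      refine ⟨hwpath.2.2, aux_chain'_drop hpath.2.2 i, ?_⟩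
      intro x hx y hy
      rw [hlast] at hx
      rw [List.head?_drop, List.getElem?_eq_getElem hip] at hy
      have hx2 : u = x := by simpa using hx
      have hy2 : p[i]'hip = y := by simpa using hy
      rw [← hx2, ← hy2]; exact hA
  have hle := aux_opt_le hP {p} (Finset.singleton_subset_iff.mpr hp) {r}
    (by intro r' hr'; rw [Finset.mem_singleton] at hr'; subst hr'; exact hrpath)
    (by intro a ha b hb hne; rw [Finset.mem_singleton] at ha hb; subst ha; subst hb
        exact absurd rfl hne)
    (by intro r' hr' s hs hsne y hyr
        rw [Finset.mem_singleton] at hr'; subst hr'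
        have hsnep : s ≠ p := by simpa using hsne
        rw [hr, List.mem_append] at hyr
        rcases hyr with h | h
        · exact hwp y h s hs
        · exact fun hyq => hdisj s hs p hp hsnep y hyq ((List.drop_sublist i p).mem h))
    (by simp only [Finset.card_singleton]; omega)
  simp only [Finset.sum_singleton] at hle
  have hrlen : r.length = w.length + (p.length - i) := by simp [hr]
  omega

/-- Vertices at the same position `j` on two different paths of the pack are
nonadjacent, provided there is an uncovered path of length `> j`. -/
lemma aux_F4 {A : V → V → Prop} {k : ℕ} {P : Finset (List V)}
    (hout : OutSemicomplete A) (hP : OptimalKPack A k P)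
    {Wp : List V} (hW : IsPath A Wp) (hWU : ∀ x ∈ Wp, x ∉ cover P)
    {p q : List V} (hp : p ∈ P) (hq : q ∈ P) (hpq : p ≠ q)
    {j : ℕ} (hjW : j < Wp.length) (hjp : j < p.length) (hjq : j < q.length)
    (hA : A (p[j]'hjp) (q[j]'hjq)) : False := by
  have hppath := hP.1.2.1 p hp
  have hqpath := hP.1.2.1 q hq
  have hdisj := hP.1.2.2
  have hcardle := hP.1.1
  have hcard2 : 2 ≤ P.card := by
    have hsub : {p, q} ⊆ P := by
      intro x hx; rcases Finset.mem_insert.mp hx with h | h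
      · exact h ▸ hp
      · exact (Finset.mem_singleton.mp h) ▸ hq
    have := Finset.card_le_card hsub
    rwa [Finset.card_pair hpq] at this
  have hWnotq : ∀ x ∈ Wp, ∀ s ∈ P, x ∉ s :=
    fun x hx s hs hxs => hWU x hx (aux_mem_cover.mpr ⟨s, hs, hxs⟩)
  -- merge the two suffixes
  have hdropp : p.drop j = (p[j]'hjp) :: p.drop (j+1) := List.drop_eq_getElem_cons hjp
  have hdropq : q.drop j = (q[j]'hjq) :: q.drop (j+1) := List.drop_eq_getElem_cons hjq
  have hnd : (p.drop j ++ q.drop j).Nodup := by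
    rw [List.nodup_append']
    refine ⟨(List.drop_sublist j p).nodup hppath.2.1,
      (List.drop_sublist j q).nodup hqpath.2.1, ?_⟩
    intro a ha hb
    exact hdisj p hp q hq hpq a ((List.drop_sublist j p).mem ha) ((List.drop_sublist j q).mem hb)
  have hcp : (p.drop j).Chain' A := aux_chain'_drop hppath.2.2 j
  have hcq : (q.drop j).Chain' A := aux_chain'_drop hqpath.2.2 j
  rw [hdropp] at hnd hcp
  rw [hdropq] at hnd hcq
  obtain ⟨z, hzperm, hzchain, hzhead⟩ := aux_zip hout
    ((p.drop (j+1)).length + (q.drop (j+1)).length) _ _ _ _ (le_refl _) hcp hcq hnd hA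
  rw [← hdropp, ← hdropq] at hzperm
  -- the two replacement paths
  set r1 : List V := p.take j ++ z with hr1
  set r2 : List V := Wp.take (j+1) with hr2
  have hr1perm : r1.Perm (p ++ q.drop j) := by
    have h1 : r1.Perm (p.take j ++ (p.drop j ++ q.drop j)) := hzperm.append_left _
    have h2 : p.take j ++ (p.drop j ++ q.drop j) = p ++ q.drop j := by
      rw [← List.append_assoc, List.take_append_drop]
    rwa [h2] at h1
  have hr1sub : ∀ y ∈ r1, y ∈ p ∨ y ∈ q := by
    intro y hy
    have := hr1perm.mem_iff.mp hy
    rw [List.mem_append] at this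
    rcases this with h | h
    · exact Or.inl h
    · exact Or.inr ((List.drop_sublist j q).mem h)
  have hr1len : r1.length = j + ((p.length - j) + (q.length - j)) := by
    rw [hr1perm.length_eq]
    simp
    omega
  have hr1path : IsPath A r1 := by
    refine ⟨List.ne_nil_of_length_pos (by omega), ?_, ?_⟩
    · refine hr1perm.symm.nodup ?_
      rw [List.nodup_append']
      refine ⟨hppath.2.1, (List.drop_sublist j q).nodup hqpath.2.1, ?_⟩
      intro a ha hb
      exact hdisj p hp q hq hpq a ha ((List.drop_sublist j q).mem hb)
    · rw [hr1]; unfold List.Chain'; rw [List.isChain_append]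
      refine ⟨aux_chain'_take hppath.2.2 _, hzchain, ?_⟩
      intro x hx y hy
      rw [hzhead] at hy
      have hy2 : p[j]'hjp = y := by simpa using hy
      rcases Nat.eq_zero_or_pos j with hj0 | hj0
      · subst hj0; simp at hx
      · have hj1 : j - 1 + 1 = j := by omega
        have htake : (p.take j).getLast? = some (p[j-1]'(by omega)) := by
          rw [List.getLast?_eq_getElem?, List.getElem?_take]
          have hlt : (p.take j).length = j := by rw [List.length_take]; omega
          rw [hlt]
          simp only [if_pos (by omega : j - 1 < j)]
          exact List.getElem?_eq_getElem (by omega)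
        rw [htake] at hx
        have hx2 : p[j-1]'(by omega) = x := by simpa using hx
        have harc : A (p[j-1]'(by omega)) (p[(j-1)+1]'(by omega)) :=
          aux_chain'_arc hppath.2.2 (by omega)
        rw [← hx2, ← hy2]
        have heq : p[(j-1)+1]'(by omega) = p[j]'hjp := by
          congr 1
        exact heq ▸ harc
  have hr2path : IsPath A r2 := by
    refine ⟨List.ne_nil_of_length_pos ?_, (List.take_sublist _ _).nodup hW.2.1,
      aux_chain'_take hW.2.2 _⟩
    rw [hr2, List.length_take]; omega
  have hr2sub : ∀ y ∈ r2, y ∈ Wp := fun y hy => (List.take_sublist _ _).mem hy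
  have hpjz : (p[j]'hjp) ∈ z := List.mem_of_mem_head? (by rw [hzhead]; rfl)
  have hpjr1 : (p[j]'hjp) ∈ r1 := by rw [hr1, List.mem_append]; exact Or.inr hpjz
  have hr12 : r1 ≠ r2 := by
    intro h
    exact hWnotq _ (hr2sub _ (h ▸ hpjr1)) p hp (List.getElem_mem hjp)
  have hle := aux_opt_le hP {p, q} (by
      intro x hx; rcases Finset.mem_insert.mp hx with h | h
      · exact h ▸ hp
      · exact (Finset.mem_singleton.mp h) ▸ hq) {r1, r2}
    (by intro r' hr'
        rcases Finset.mem_insert.mp hr' with h | h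
        · exact h ▸ hr1path
        · exact (Finset.mem_singleton.mp h) ▸ hr2path)
    (by intro a ha b hb hne x hxa hxb
        rcases Finset.mem_insert.mp ha with h1 | h1 <;>
          rcases Finset.mem_insert.mp hb with h2 | h2
        · exact absurd (h1.trans h2.symm) hne
        · subst h1
          have h2' := Finset.mem_singleton.mp h2; subst h2'
          rcases hr1sub x hxa with h | h
          · exact hWnotq x (hr2sub x hxb) p hp h
          · exact hWnotq x (hr2sub x hxb) q hq h
        · have h1' := Finset.mem_singleton.mp h1; subst h1'; subst h2
          rcases hr1sub x hxb with h | h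
          · exact hWnotq x (hr2sub x hxa) p hp h
          · exact hWnotq x (hr2sub x hxa) q hq h
        · have h1' := Finset.mem_singleton.mp h1
          have h2' := Finset.mem_singleton.mp h2
          exact absurd (h1'.trans h2'.symm) hne)
    (by intro r' hr' s hs hsne x hxr
        have hsp : s ≠ p := fun h => hsne (by rw [h]; exact Finset.mem_insert_self _ _)
        have hsq : s ≠ q := fun h => hsne (by rw [h]; simp)
        rcases Finset.mem_insert.mp hr' with h | h
        · subst h
          rcases hr1sub x hxr with h | h
          · exact fun hxs => hdisj s hs p hp hsp x hxs h
          · exact fun hxs => hdisj s hs q hq hsq x hxs h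
        · have h' := Finset.mem_singleton.mp h; subst h'
          exact hWnotq x (hr2sub x hxr) s hs)
    (by rw [Finset.card_pair hr12, Finset.card_pair hpq]; omega)
  rw [Finset.sum_pair hr12, Finset.sum_pair hpq] at hle
  have hr2len : r2.length = j + 1 := by rw [hr2, List.length_take]; omega
  omega

/-- Aharoni-Hartman-Hoffman's Conjecture for out-semicomplete digraphs. -/
theorem stmt9 (A : V → V → Prop) (hirr : Irreflexive A) (hout : OutSemicomplete A)
    (k : ℕ) (hk : 0 < k) (P : Finset (List V)) (hP : OptimalKPack A k P) :
    ∃ C : Finset (Finset V), IsColoring A C ∧ OrthoCP k C P := by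
  classical
  have hpaths := hP.1.2.1
  have hdisj := hP.1.2.2
  have hcardle := hP.1.1
  by_cases hcov : ∀ v : V, v ∈ cover P
  · -- every vertex covered: use singleton classes
    refine ⟨Finset.univ.image (fun v => ({v} : Finset V)), ⟨?_, ?_, ?_, ?_⟩, ?_⟩
    · intro c hc
      obtain ⟨v, _, rfl⟩ := Finset.mem_image.mp hc
      intro a ha b hb hne
      rw [Finset.coe_singleton, Set.mem_singleton_iff] at ha hb
      exact absurd (ha.trans hb.symm) hne
    · intro c hc
      obtain ⟨v, _, rfl⟩ := Finset.mem_image.mp hc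
      exact ⟨v, Finset.mem_singleton_self v⟩
    · intro c hc c' hc' hne
      obtain ⟨v, _, rfl⟩ := Finset.mem_image.mp hc
      obtain ⟨w, _, rfl⟩ := Finset.mem_image.mp hc'
      have hvw : v ≠ w := fun h => hne (by rw [h])
      exact Finset.disjoint_singleton.mpr hvw
    · intro v
      exact ⟨{v}, Finset.mem_image_of_mem _ (Finset.mem_univ v), Finset.mem_singleton_self v⟩
    · intro c hc
      obtain ⟨v, _, rfl⟩ := Finset.mem_image.mp hc
      obtain ⟨p, hp, hvp⟩ := aux_mem_cover.mp (hcov v)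
      have hmem : p ∈ P.filter (fun p => ∃ x ∈ ({v} : Finset V), x ∈ p) :=
        Finset.mem_filter.mpr ⟨hp, v, Finset.mem_singleton_self v, hvp⟩
      have hpos : 0 < (P.filter (fun p => ∃ x ∈ ({v} : Finset V), x ∈ p)).card :=
        Finset.card_pos.mpr ⟨p, hmem⟩
      have h1 : ({v} : Finset V).card = 1 := Finset.card_singleton v
      omega
  · -- some vertex uncovered
    push_neg at hcov
    obtain ⟨u0, hu0⟩ := hcov
    have hcardP : P.card = k := by
      by_contra hnek
      have hlt : P.card < k := lt_of_le_of_ne hcardle hnek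
      have hle := aux_opt_le hP ∅ (Finset.empty_subset _) {[u0]}
        (by intro r hr; rw [Finset.mem_singleton] at hr; subst hr
            exact ⟨by simp, List.nodup_singleton _, List.isChain_singleton _⟩)
        (by intro a ha b hb hne; rw [Finset.mem_singleton] at ha hb; subst ha; subst hb
            exact absurd rfl hne)
        (by intro r hr q hq _ x hx
            rw [Finset.mem_singleton] at hr; subst hr
            have hxu : x = u0 := by simpa using hx
            subst hxu
            exact fun hxq => hu0 (aux_mem_cover.mpr ⟨q, hq, hxq⟩))
        (by simp only [Finset.card_singleton, Finset.card_empty]; omega)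
      simp at hle
    have hPne : P.Nonempty := by rw [← Finset.card_pos, hcardP]; exact hk
    -- the longest uncovered path
    set LSet : Set ℕ :=
      {n | ∃ w : List V, IsPath A w ∧ (∀ x ∈ w, x ∉ cover P) ∧ w.length = n} with hLSet
    have hbdd : BddAbove LSet := by
      refine ⟨Fintype.card V, ?_⟩
      rintro n ⟨w, hw, _, rfl⟩
      exact hw.2.1.length_le_card
    have hne1 : (1 : ℕ) ∈ LSet :=
      ⟨[u0], ⟨by simp, List.nodup_singleton _, List.isChain_singleton _⟩,
        by simpa using hu0, rfl⟩
    set L : ℕ := sSup LSet with hL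
    obtain ⟨Wp, hWpath, hWU, hWlen⟩ := Nat.sSup_mem ⟨1, hne1⟩ hbdd
    have hL1 : 1 ≤ L := le_csSup hbdd hne1
    -- every path of the pack has length at least L
    have hF3 : ∀ p ∈ P, L ≤ p.length := by
      intro p hp
      by_contra hlen
      push_neg at hlen
      have hle := aux_opt_le hP {p} (Finset.singleton_subset_iff.mpr hp) {Wp}
        (by intro r hr; rw [Finset.mem_singleton] at hr; subst hr; exact hWpath)
        (by intro a ha b hb hne; rw [Finset.mem_singleton] at ha hb; subst ha; subst hb
            exact absurd rfl hne)
        (by intro r hr q hq hqne x hx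
            rw [Finset.mem_singleton] at hr; subst hr
            exact fun hxq => hWU x hx (aux_mem_cover.mpr ⟨q, hq, hxq⟩))
        (by simp only [Finset.card_singleton]
            have : 1 ≤ P.card := Finset.card_pos.mpr ⟨p, hp⟩
            omega)
      simp only [Finset.sum_singleton] at hle
      omega
    -- levelling the uncovered vertices
    set U : Finset V := Finset.univ.filter (fun v => v ∉ cover P) with hU
    obtain ⟨lev, hlev1, hlevwit, hlevne⟩ := aux_gallai_roy A hirr U
    have hUunc : ∀ u ∈ U, u ∉ cover P := fun u hu => (Finset.mem_filter.mp hu).2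
    have hUmem : ∀ u, u ∉ cover P → u ∈ U :=
      fun u hu => Finset.mem_filter.mpr ⟨Finset.mem_univ u, hu⟩
    have hlevL : ∀ u ∈ U, lev u ≤ L := by
      intro u hu
      obtain ⟨qq, hqc, hqU, hqnd, hqlast, hqlen⟩ := hlevwit u hu
      have hqne : qq ≠ [] := by intro h; rw [h] at hqlast; simp at hqlast
      have hmem : qq.length ∈ LSet :=
        ⟨qq, ⟨hqne, hqnd, hqc⟩, fun x hx => hUunc x (hqU x hx), rfl⟩
      rw [← hqlen]
      exact le_csSup hbdd hmem
    -- level witness paths are uncovered paths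
    have hlevpath : ∀ u ∈ U, ∃ qq : List V, IsPath A qq ∧ (∀ x ∈ qq, x ∉ cover P) ∧
        qq.getLast? = some u ∧ qq.length = lev u := by
      intro u hu
      obtain ⟨qq, hqc, hqU, hqnd, hqlast, hqlen⟩ := hlevwit u hu
      have hqne : qq ≠ [] := by intro h; rw [h] at hqlast; simp at hqlast
      exact ⟨qq, ⟨hqne, hqnd, hqc⟩, fun x hx => hUunc x (hqU x hx), hqlast, hqlen⟩
    -- the color classes
    set T : ℕ → Finset V := fun j => P.biUnion (fun p => (p[j]?).toFinset) with hT
    set S : ℕ → Finset V := fun j => U.filter (fun u => lev u = j + 1) with hS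
    set Cl : ℕ → Finset V := fun j => T j ∪ S j with hCl
    set Rest : Finset V := Finset.univ \ (Finset.range L).biUnion Cl with hRest
    set C : Finset (Finset V) :=
      ((Finset.range L).image Cl) ∪ Rest.image (fun v => ({v} : Finset V)) with hC
    have hmemT : ∀ j x, x ∈ T j ↔ ∃ p ∈ P, p[j]? = some x := by
      intro j x
      simp only [hT, Finset.mem_biUnion, Option.mem_toFinset, Option.mem_def]
    have hTcov : ∀ j x, x ∈ T j → x ∈ cover P := by
      intro j x hx
      obtain ⟨p, hp, hpx⟩ := (hmemT j x).mp hx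
      obtain ⟨hlt, heq⟩ := List.getElem?_eq_some_iff.mp hpx
      exact aux_mem_cover.mpr ⟨p, hp, heq ▸ List.getElem_mem hlt⟩
    have hmemS : ∀ j x, x ∈ S j ↔ x ∈ U ∧ lev x = j + 1 := by
      intro j x
      simp only [hS, Finset.mem_filter]
    -- stability of the classes
    have hstab : ∀ j, j < L → DStable A ((Cl j : Finset V) : Set V) := by
      intro j hjL a ha b hb hne hadj
      rw [Finset.mem_coe] at ha hb
      simp only [hCl, Finset.mem_union] at ha hb
      have hWlenL : Wp.length = L := hWlen
      -- helper facts
      have hTS : ∀ x y, x ∈ T j → y ∈ S j → ¬ DAdj A x y := by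
        intro x y hx hy hxy
        obtain ⟨p, hp, hpx⟩ := (hmemT j x).mp hx
        obtain ⟨hjp, heq⟩ := List.getElem?_eq_some_iff.mp hpx
        obtain ⟨hyU, hylev⟩ := (hmemS j y).mp hy
        have hyunc : y ∉ cover P := hUunc y hyU
        rcases hxy with h | h
        · exact aux_F1 hout hP hp hyunc x (heq ▸ List.getElem_mem hjp) h
        · obtain ⟨qq, hqpath, hqunc, hqlast, hqlen⟩ := hlevpath y hyU
          have hjw : j < qq.length := by omega
          exact aux_F2 hP hqpath hqunc hqlast hp hjw hjp (heq ▸ h)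
      rcases ha with ha | ha <;> rcases hb with hb | hb
      · -- both in T j
        obtain ⟨p, hp, hpa⟩ := (hmemT j a).mp ha
        obtain ⟨q, hq, hqb⟩ := (hmemT j b).mp hb
        obtain ⟨hjp, heqa⟩ := List.getElem?_eq_some_iff.mp hpa
        obtain ⟨hjq, heqb⟩ := List.getElem?_eq_some_iff.mp hqb
        have hpq : p ≠ q := by
          intro h
          subst h
          exact hne (heqa ▸ heqb ▸ rfl)
        have hjW : j < Wp.length := by omega
        rcases hadj with h | h
        · exact aux_F4 hout hP hWpath hWU hp hq hpq hjW hjp hjq (heqa ▸ heqb ▸ h)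
        · exact aux_F4 hout hP hWpath hWU hq hp hpq.symm hjW hjq hjp (heqa ▸ heqb ▸ h)
      · exact hTS a b ha hb hadj
      · exact hTS b a hb ha (Or.symm hadj)
      · -- both in S j
        obtain ⟨haU, halev⟩ := (hmemS j a).mp ha
        obtain ⟨hbU, hblev⟩ := (hmemS j b).mp hb
        rcases hadj with h | h
        · exact hlevne a haU b hbU h (halev.trans hblev.symm)
        · exact hlevne b hbU a haU h (hblev.trans halev.symm)
    -- every path meets every class Cl j
    have hfilter : ∀ j, j < L → P.filter (fun p => ∃ x ∈ Cl j, x ∈ p) = P := by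
      intro j hjL
      apply Finset.filter_true_of_mem
      intro p hp
      have hjp : j < p.length := lt_of_lt_of_le hjL (hF3 p hp)
      refine ⟨p[j]'hjp, ?_, List.getElem_mem hjp⟩
      simp only [hCl, Finset.mem_union]
      exact Or.inl ((hmemT j _).mpr ⟨p, hp, List.getElem?_eq_getElem hjp⟩)
    -- Rest consists of covered vertices
    have hRestCov : ∀ v ∈ Rest, v ∈ cover P := by
      intro v hv
      by_contra hvc
      have hvU : v ∈ U := hUmem v hvc
      have h1 : 1 ≤ lev v := hlev1 v hvU
      have h2 : lev v ≤ L := hlevL v hvU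
      have hmem : v ∈ (Finset.range L).biUnion Cl := by
        refine Finset.mem_biUnion.mpr ⟨lev v - 1, Finset.mem_range.mpr (by omega), ?_⟩
        simp only [hCl, Finset.mem_union]
        exact Or.inr ((hmemS _ v).mpr ⟨hvU, by omega⟩)
      rw [hRest] at hv
      exact (Finset.mem_sdiff.mp hv).2 hmem
    -- disjointness of the big classes
    have hCldisj : ∀ j, j < L → ∀ j', j' < L → j ≠ j' → Disjoint (Cl j) (Cl j') := by
      intro j hj j' hj' hnejj
      rw [Finset.disjoint_left]
      intro x hx hx'
      simp only [hCl, Finset.mem_union] at hx hx'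
      rcases hx with hx | hx <;> rcases hx' with hx' | hx'
      · obtain ⟨p, hp, hpx⟩ := (hmemT j x).mp hx
        obtain ⟨q, hq, hqx⟩ := (hmemT j' x).mp hx'
        obtain ⟨hjp, heqa⟩ := List.getElem?_eq_some_iff.mp hpx
        obtain ⟨hjq, heqb⟩ := List.getElem?_eq_some_iff.mp hqx
        have hpq : p = q := by
          by_contra hpq
          exact hdisj p hp q hq hpq x (heqa ▸ List.getElem_mem hjp)
            (heqb ▸ List.getElem_mem hjq)
        subst hpq
        have hnd := (hpaths p hp).2.1
        exact hnejj ((hnd.getElem_inj_iff).mp (heqa.trans heqb.symm))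
      · exact hUunc x ((hmemS j' x).mp hx').1 (hTcov j x hx)
      · exact hUunc x ((hmemS j x).mp hx).1 (hTcov j' x hx')
      · have h1 := ((hmemS j x).mp hx).2
        have h2 := ((hmemS j' x).mp hx').2
        omega
    refine ⟨C, ⟨?_, ?_, ?_, ?_⟩, ?_⟩
    · -- stability
      intro c hc
      simp only [hC, Finset.mem_union, Finset.mem_image, Finset.mem_range] at hc
      rcases hc with ⟨j, hj, rfl⟩ | ⟨v, hv, rfl⟩
      · exact hstab j hj
      · intro a ha b hb hne
        rw [Finset.coe_singleton, Set.mem_singleton_iff] at ha hb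
        exact absurd (ha.trans hb.symm) hne
    · -- nonemptiness
      intro c hc
      simp only [hC, Finset.mem_union, Finset.mem_image, Finset.mem_range] at hc
      rcases hc with ⟨j, hj, rfl⟩ | ⟨v, hv, rfl⟩
      · obtain ⟨p, hp⟩ := hPne
        have hjp : j < p.length := lt_of_lt_of_le hj (hF3 p hp)
        refine ⟨p[j]'hjp, ?_⟩
        simp only [hCl, Finset.mem_union]
        exact Or.inl ((hmemT j _).mpr ⟨p, hp, List.getElem?_eq_getElem hjp⟩)
      · exact ⟨v, Finset.mem_singleton_self v⟩
    · -- pairwise disjointness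
      intro c hc c' hc' hne
      simp only [hC, Finset.mem_union, Finset.mem_image, Finset.mem_range] at hc hc'
      rcases hc with ⟨j, hj, rfl⟩ | ⟨v, hv, rfl⟩ <;>
        rcases hc' with ⟨j', hj', rfl⟩ | ⟨v', hv', rfl⟩
      · refine hCldisj j hj j' hj' ?_
        intro h; exact hne (by rw [h])
      · rw [Finset.disjoint_singleton_right]
        intro hmem
        rw [hRest, Finset.mem_sdiff] at hv'
        exact hv'.2 (Finset.mem_biUnion.mpr ⟨j, Finset.mem_range.mpr hj, hmem⟩)
      · rw [Finset.disjoint_singleton_left]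
        intro hmem
        rw [hRest, Finset.mem_sdiff] at hv
        exact hv.2 (Finset.mem_biUnion.mpr ⟨j', Finset.mem_range.mpr hj', hmem⟩)
      · have hvv : v ≠ v' := fun h => hne (by rw [h])
        exact Finset.disjoint_singleton.mpr hvv
    · -- covering
      intro v
      by_cases hv : v ∈ (Finset.range L).biUnion Cl
      · obtain ⟨j, hj, hvj⟩ := Finset.mem_biUnion.mp hv
        refine ⟨Cl j, ?_, hvj⟩
        simp only [hC, Finset.mem_union, Finset.mem_image, Finset.mem_range]
        exact Or.inl ⟨j, Finset.mem_range.mp hj, rfl⟩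
      · refine ⟨{v}, ?_, Finset.mem_singleton_self v⟩
        simp only [hC, Finset.mem_union, Finset.mem_image]
        refine Or.inr ⟨v, ?_, rfl⟩
        rw [hRest, Finset.mem_sdiff]
        exact ⟨Finset.mem_univ v, hv⟩
    · -- orthogonality
      intro c hc
      simp only [hC, Finset.mem_union, Finset.mem_image, Finset.mem_range] at hc
      rcases hc with ⟨j, hj, rfl⟩ | ⟨v, hv, rfl⟩
      · rw [hfilter j hj, hcardP]
        exact min_le_right _ _
      · obtain ⟨p, hp, hvp⟩ := aux_mem_cover.mp (hRestCov v hv)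
        have hmem : p ∈ P.filter (fun p => ∃ x ∈ ({v} : Finset V), x ∈ p) :=
          Finset.mem_filter.mpr ⟨hp, v, Finset.mem_singleton_self v, hvp⟩
        have hpos : 0 < (P.filter (fun p => ∃ x ∈ ({v} : Finset V), x ∈ p)).card :=
          Finset.card_pos.mpr ⟨p, hmem⟩
        have h1 : ({v} : Finset V).card = 1 := Finset.card_singleton v
        omega

end DigraphPaper
end

section
/- In every in-semicomplete digraph D, if there exists a path partition P such that e(P) is stable, then the 1-norm π_1(D) ≤ |P|; in particular, for any path partition of an in-semicomplete digraph, either e(P) is not stable and P can be replaced by a partition with fewer paths, or e(P) is a stable set witnessing π(D) ≤ α(D). -/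
open scoped Classical

namespace DigraphPaper

variable {V : Type*} [Fintype V] [DecidableEq V]

lemma merge_aux (A : V → V → Prop) (hin : InSemicomplete A) :
    ∀ n : ℕ, ∀ p q : List V, p.length + q.length ≤ n →
    IsPath A p → IsPath A q → (∀ x ∈ p, x ∉ q) →
    ∀ u v : V, p.getLast? = some u → q.getLast? = some v → A u v →
    ∃ m : List V, IsPath A m ∧ (∀ x, x ∈ m ↔ x ∈ p ∨ x ∈ q) ∧
      m.getLast? = some v := by
  intro n
  induction n with
  | zero =>
    intro p q hlen hp _ _ u v _ _ _
    exact absurd (Nat.le_zero.1 hlen) (by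
      have := List.length_pos_iff.2 hp.1; omega)
  | succ n ih =>
    intro p q hlen hp hq hdisj u v hu hv huv
    rcases q.eq_nil_or_concat with rfl | ⟨q', v', rfl⟩
    · simp at hv
    · rw [List.concat_eq_append] at *
      have hv' : v' = v := by
        rw [List.getLast?_concat] at hv; exact Option.some.inj hv
      subst hv'
      have hqn : (q' ++ [v']).Nodup := hq.2.1
      have hq'nd : q'.Nodup := (List.nodup_append.1 hqn).1
      have hvq' : v' ∉ q' := by
        intro h
        exact (List.disjoint_of_nodup_append hqn) h (by simp)
      have hchain := List.isChain_append.1 hq.2.2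
      have hvp : v' ∉ p := fun h => hdisj v' h (by simp)
      rcases eq_or_ne q' [] with rfl | hq'ne
      · -- m = p ++ [v']
        refine ⟨p ++ [v'], ⟨by simp [hp.1], ?_, ?_⟩, ?_, List.getLast?_concat⟩
        · exact List.nodup_append.2 ⟨hp.2.1, by simp, by intro a ha b hb; simp at hb; subst hb; rintro rfl; exact hvp ha⟩
        · exact hp.2.2.append (List.isChain_singleton v')
            (by intro x hx y hy; simp at hy; subst hy
                rw [hu] at hx; obtain rfl : u = x := by simpa using hx
                exact huv)
        · intro x; simp
      · have hq's : q'.getLast? = some (q'.getLast hq'ne) :=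
          List.getLast?_eq_getLast_of_ne_nil hq'ne
        set w := q'.getLast hq'ne with hw
        have hwq' : w ∈ q' := List.getLast_mem hq'ne
        have hAwv : A w v' := hchain.2.2 w (by rw [hq's]; rfl) v' rfl
        have hup : u ∈ p := by
          rw [List.getLast?_eq_getLast_of_ne_nil hp.1] at hu
          exact (Option.some.inj hu) ▸ List.getLast_mem hp.1
        have hne : u ≠ w := fun h => hdisj u hup (by simp [h, hwq'])
        have hq'path : IsPath A q' := ⟨hq'ne, hq'nd, hchain.1⟩
        have hlen' : p.length + q'.length ≤ n := by
          simp at hlen; omega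
        rcases hin v' u w huv hAwv hne with hAuw | hAwu
        · obtain ⟨m', hm', hmem', hlast'⟩ := ih p q' hlen' hp hq'path
            (fun x hx hx2 => hdisj x hx (by simp [hx2])) u w hu hq's hAuw
          have hvm' : v' ∉ m' := fun h => by
            rcases (hmem' v').1 h with h | h
            exacts [hvp h, hvq' h]
          refine ⟨m' ++ [v'], ⟨by simp [hm'.1], ?_, ?_⟩, ?_, List.getLast?_concat⟩
          · exact List.nodup_append.2 ⟨hm'.2.1, by simp, by intro a ha b hb; simp at hb; subst hb; rintro rfl; exact hvm' ha⟩
          · exact hm'.2.2.append (List.isChain_singleton v')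
              (by intro x hx y hy; simp at hy; subst hy
                  rw [hlast'] at hx; obtain rfl : w = x := by simpa using hx
                  exact hAwv)
          · intro x; simp [hmem' x]; tauto
        · obtain ⟨m', hm', hmem', hlast'⟩ := ih q' p (by omega) hq'path hp
            (fun x hx hx2 => hdisj x hx2 (by simp [hx])) w u hq's hu hAwu
          have hvm' : v' ∉ m' := fun h => by
            rcases (hmem' v').1 h with h | h
            exacts [hvq' h, hvp h]
          refine ⟨m' ++ [v'], ⟨by simp [hm'.1], ?_, ?_⟩, ?_, List.getLast?_concat⟩
          · exact List.nodup_append.2 ⟨hm'.2.1, by simp, by intro a ha b hb; simp at hb; subst hb; rintro rfl; exact hvm' ha⟩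
          · exact hm'.2.2.append (List.isChain_singleton v')
              (by intro x hx y hy; simp at hy; subst hy
                  rw [hlast'] at hx; obtain rfl : u = x := by simpa using hx
                  exact huv)
          · intro x; simp [hmem' x]; tauto

lemma shrink (A : V → V → Prop) (hin : InSemicomplete A)
    (P : Finset (List V)) (hP : IsPathPartition A P)
    (p q : List V) (hpP : p ∈ P) (hqP : q ∈ P) (hpq : p ≠ q)
    (u v : V) (hu : p.getLast? = some u) (hv : q.getLast? = some v)
    (huv : A u v) :
    ∃ Q : Finset (List V), IsPathPartition A Q ∧ Q.card < P.card := by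
  obtain ⟨m, hm, hmem, _⟩ := merge_aux A hin (p.length + q.length) p q le_rfl
    (hP.1 p hpP) (hP.1 q hqP) (hP.2.1 p hpP q hqP hpq) u v hu hv huv
  refine ⟨insert m ((P.erase p).erase q), ⟨?_, ?_, ?_⟩, ?_⟩
  · intro r hr
    rcases Finset.mem_insert.1 hr with rfl | hr
    · exact hm
    · exact hP.1 r (Finset.mem_of_mem_erase (Finset.mem_of_mem_erase hr))
  · intro r hr s hs hrs x hxr hxs
    rcases Finset.mem_insert.1 hr with hrE | hrE
    · subst hrE
      rcases Finset.mem_insert.1 hs with hsE | hsE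
      · exact hrs hsE.symm
      obtain ⟨hsq, hs'⟩ := Finset.mem_erase.1 hsE
      obtain ⟨hsp, hsP⟩ := Finset.mem_erase.1 hs'
      rcases (hmem x).1 hxr with h | h
      · exact hP.2.1 p hpP s hsP (Ne.symm hsp) x h hxs
      · exact hP.2.1 q hqP s hsP (Ne.symm hsq) x h hxs
    rcases Finset.mem_insert.1 hs with hsE | hsE
    · subst hsE
      obtain ⟨hrq, hr'⟩ := Finset.mem_erase.1 hrE
      obtain ⟨hrp, hrP⟩ := Finset.mem_erase.1 hr'
      rcases (hmem x).1 hxs with h | h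
      · exact hP.2.1 p hpP r hrP (Ne.symm hrp) x h hxr
      · exact hP.2.1 q hqP r hrP (Ne.symm hrq) x h hxr
    · obtain ⟨_, hr'⟩ := Finset.mem_erase.1 hrE
      obtain ⟨_, hs'⟩ := Finset.mem_erase.1 hsE
      exact hP.2.1 r (Finset.mem_of_mem_erase hr') s (Finset.mem_of_mem_erase hs')
        hrs x hxr hxs
  · intro x
    obtain ⟨r, hrP, hxr⟩ := hP.2.2 x
    rcases eq_or_ne r p with rfl | hrp
    · exact ⟨m, Finset.mem_insert_self _ _, (hmem x).2 (Or.inl hxr)⟩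
    rcases eq_or_ne r q with rfl | hrq
    · exact ⟨m, Finset.mem_insert_self _ _, (hmem x).2 (Or.inr hxr)⟩
    · exact ⟨r, Finset.mem_insert_of_mem
        (Finset.mem_erase.2 ⟨hrq, Finset.mem_erase.2 ⟨hrp, hrP⟩⟩), hxr⟩
  · have hq' : q ∈ P.erase p := Finset.mem_erase.2 ⟨Ne.symm hpq, hqP⟩
    have h1 : ((P.erase p).erase q).card = P.card - 1 - 1 := by
      rw [Finset.card_erase_of_mem hq', Finset.card_erase_of_mem hpP]
    have h2 : 2 ≤ P.card := Finset.one_lt_card.2 ⟨p, hpP, q, hqP, hpq⟩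
    calc (insert m ((P.erase p).erase q)).card
        ≤ ((P.erase p).erase q).card + 1 := Finset.card_insert_le _ _
      _ < P.card := by omega

/-- In an in-semicomplete digraph, a path partition with stable endpoint set
witnesses π(D) ≤ |P|; and every path partition either has non-stable
endpoints and can be replaced by a smaller partition, or has stable
endpoints witnessing π(D) ≤ α(D). -/
theorem stmt11 (A : V → V → Prop) (hirr : Irreflexive A)
    (hin : InSemicomplete A) :
    (∀ P : Finset (List V), IsPathPartition A P → DStable A (pends P) →
      piNum A ≤ P.card) ∧
    (∀ P : Finset (List V), IsPathPartition A P →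
      (¬ DStable A (pends P) ∧
        ∃ Q : Finset (List V), IsPathPartition A Q ∧ Q.card < P.card) ∨
      (DStable A (pends P) ∧ piNum A ≤ alphaNum A)) := by
  have hpile : ∀ P : Finset (List V), IsPathPartition A P → piNum A ≤ P.card := by
    intro P hP
    exact Nat.sInf_le ⟨P, hP, rfl⟩
  refine ⟨fun P hP _ => hpile P hP, fun P hP => ?_⟩
  by_cases hS : DStable A (pends P)
  · refine Or.inr ⟨hS, ?_⟩
    set S : Finset V := Finset.univ.filter (fun x => ∃ p ∈ P, p.getLast? = some x)
      with hSdef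
    have hcard : P.card ≤ S.card := by
      have hinj : Set.InjOn List.getLast? (P : Set (List V)) := by
        intro p hp q hq h
        by_contra hne
        have hp0 : p ≠ [] := (hP.1 p hp).1
        obtain ⟨u, hu⟩ : ∃ u, p.getLast? = some u :=
          ⟨p.getLast hp0, List.getLast?_eq_getLast_of_ne_nil hp0⟩
        have hup : u ∈ p := by
          rw [List.getLast?_eq_getLast_of_ne_nil hp0] at hu
          exact (Option.some.inj hu) ▸ List.getLast_mem hp0
        have huq : u ∈ q := by
          have hq0 : q ≠ [] := (hP.1 q hq).1
          have : q.getLast? = some u := by rw [← h, hu]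
          rw [List.getLast?_eq_getLast_of_ne_nil hq0] at this
          exact (Option.some.inj this) ▸ List.getLast_mem hq0
        exact hP.2.1 p hp q hq hne u hup huq
      have h1 : (P.image List.getLast?).card = P.card :=
        Finset.card_image_of_injOn hinj
      have h2 : P.image List.getLast? ⊆ S.image some := by
        intro o ho
        obtain ⟨p, hp, rfl⟩ := Finset.mem_image.1 ho
        have hp0 : p ≠ [] := (hP.1 p hp).1
        refine Finset.mem_image.2 ⟨p.getLast hp0, ?_, ?_⟩
        · exact Finset.mem_filter.2 ⟨Finset.mem_univ _,
            ⟨p, hp, List.getLast?_eq_getLast_of_ne_nil hp0⟩⟩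
        · exact (List.getLast?_eq_getLast_of_ne_nil hp0).symm
      calc P.card = (P.image List.getLast?).card := h1.symm
        _ ≤ (S.image some).card := Finset.card_le_card h2
        _ ≤ S.card := Finset.card_image_le
    have hSstable : DStable A (S : Set V) := by
      intro a ha b hb hab
      have ha' : a ∈ pends P := (Finset.mem_filter.1 ha).2
      have hb' : b ∈ pends P := (Finset.mem_filter.1 hb).2
      exact hS a ha' b hb' hab
    have halpha : S.card ≤ alphaNum A := by
      apply le_csSup
      · exact ⟨Fintype.card V, by
          rintro n ⟨T, _, rfl⟩; exact Finset.card_le_univ T⟩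
      · exact ⟨S, hSstable, rfl⟩
    exact le_trans (hpile P hP) (le_trans hcard halpha)
  · refine Or.inl ⟨hS, ?_⟩
    rw [DStable] at hS
    push_neg at hS
    obtain ⟨u, hu, v, hv, hne, hadj⟩ := hS
    obtain ⟨p, hpP, hup⟩ := hu
    obtain ⟨q, hqP, hvq⟩ := hv
    have hpq : p ≠ q := by
      rintro rfl
      exact hne (Option.some.inj (hup ▸ hvq))
    rcases hadj with h | h
    · exact shrink A hin P hP p q hpP hqP hpq u v hup hvq h
    · exact shrink A hin P hP q p hqP hpP (Ne.symm hpq) v u hvq hup h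


end DigraphPaper
end
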